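/- arXiv:2511.20171 — 6 statements merged into one kernel-verified Lean document; each statement's English description precedes it below -/
import Mathlib

section
/- If G is a finite nonabelian simple group and M is a proper subgroup of G of maximal order among proper subgroups, then the permutation character (1_M)^G has a nonprincipal irreducible constituent, and no nonprincipal irreducible constituent of (1_M)^G is monomial. -/
open scoped BigOperators Classical

/-- The character of a finite group induced from a function on a subgroup,
given by the usual induction formula. -/
noncomputable def indChar {G : Type} [Group G] (H : Subgroup G) (φ : H → ℂ) : G → ℂ :=
  fun g => (Nat.card H : ℂ)⁻¹ *
    ∑ᶠ x : G, if h : x * g * x⁻¹ ∈ H then φ (⟨x * g * x⁻¹, h⟩ : H) else 0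

/-- The permutation character `(1_M)^G`. -/
noncomputable def permChar {G : Type} [Group G] (M : Subgroup G) : G → ℂ :=
  indChar M (fun _ => 1)

/-- The usual inner product of class functions on a finite group. -/
noncomputable def charInner (G : Type) [Group G] (φ ψ : G → ℂ) : ℂ :=
  (Nat.card G : ℂ)⁻¹ * ∑ᶠ g : G, φ g * (starRingEnd ℂ) (ψ g)

/-- `χ` is an irreducible complex character of `G`. -/
def IsIrrChar (G : Type) [Group G] (χ : G → ℂ) : Prop :=
  ∃ V : FDRep ℂ G, CategoryTheory.Simple V ∧ FDRep.character V = χ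

/-- `χ` is an irreducible constituent of the (virtual) character `ψ`. -/
def IsConstituent (G : Type) [Group G] (χ ψ : G → ℂ) : Prop :=
  IsIrrChar G χ ∧ charInner G χ ψ ≠ 0

/-- A linear character of a subgroup: a multiplicative function to `ℂ` taking value `1` at `1`. -/
def IsLinearChar {G : Type} [Group G] (H : Subgroup G) (φ : H → ℂ) : Prop :=
  φ 1 = 1 ∧ ∀ a b : H, φ (a * b) = φ a * φ b

/-- A character is monomial if it is induced from a linear character of a subgroup. -/
def IsMonomial (G : Type) [Group G] (χ : G → ℂ) : Prop :=
  ∃ (H : Subgroup G) (φ : H → ℂ), IsLinearChar H φ ∧ χ = indChar H φ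

/-- The kernel of a character, as a set. -/
def charKer (G : Type) [Group G] (χ : G → ℂ) : Set G := {g | χ g = χ 1}

/-- `n` is a `π`-number: all its prime divisors lie in `π`. -/
def IsPiNumber (π : Set ℕ) (n : ℕ) : Prop := ∀ p : ℕ, p.Prime → p ∣ n → p ∈ π

/-- The largest normal `π'`-subgroup `O_{π'}(G)` (as the join of all normal `π'`-subgroups). -/
def Opi' (π : Set ℕ) (G : Type) [Group G] : Subgroup G :=
  ⨆ N ∈ {N : Subgroup G | N.Normal ∧ IsPiNumber πᶜ (Nat.card N)}, N

/-- `G` is `π`-separable: it has a normal series whose factors are `π`-groups or `π'`-groups. -/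
def IsPiSeparable (π : Set ℕ) (G : Type) [Group G] : Prop :=
  ∃ (n : ℕ) (H : Fin (n + 1) → Subgroup G),
    H 0 = ⊥ ∧ H (Fin.last n) = ⊤ ∧
    ∀ i : Fin n, H i.castSucc ≤ H i.succ ∧
      ((H i.castSucc).subgroupOf (H i.succ)).Normal ∧
      (IsPiNumber π (Nat.card (H i.succ ⧸ (H i.castSucc).subgroupOf (H i.succ))) ∨
       IsPiNumber πᶜ (Nat.card (H i.succ ⧸ (H i.castSucc).subgroupOf (H i.succ))))

/-- `G` is `π`-solvable: it has a normal series whose factors are `π'`-groups or solvable. -/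
def IsPiSolvable (π : Set ℕ) (G : Type) [Group G] : Prop :=
  ∃ (n : ℕ) (H : Fin (n + 1) → Subgroup G),
    H 0 = ⊥ ∧ H (Fin.last n) = ⊤ ∧
    ∀ i : Fin n, H i.castSucc ≤ H i.succ ∧
      ∃ hn : ((H i.castSucc).subgroupOf (H i.succ)).Normal,
      (IsPiNumber πᶜ (Nat.card (H i.succ ⧸ (H i.castSucc).subgroupOf (H i.succ))) ∨
       (letI := hn; IsSolvable (H i.succ ⧸ (H i.castSucc).subgroupOf (H i.succ))))

/-- The inertia subgroup `I_G(λ)` of a character of a normal subgroup. -/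
def inertia {G : Type} [Group G] (N : Subgroup G) (hN : N.Normal) (lam : N → ℂ) :
    Subgroup G where
  carrier := {g | ∀ n : N, lam ⟨g * n * g⁻¹, hN.conj_mem n n.2 g⟩ = lam n}
  one_mem' := by intro n; simp
  mul_mem' := by
    intro a b ha hb n
    have h1 := ha ⟨b * (n : G) * b⁻¹, hN.conj_mem n n.2 b⟩
    have h2 := hb n
    have e : (a * b) * (n : G) * (a * b)⁻¹ = a * (b * (n : G) * b⁻¹) * a⁻¹ := by group
    calc lam ⟨(a * b) * (n : G) * (a * b)⁻¹, hN.conj_mem n n.2 (a * b)⟩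
        = lam ⟨a * (b * (n : G) * b⁻¹) * a⁻¹, by
            rw [← e]; exact hN.conj_mem n n.2 (a * b)⟩ := by
          congr 1; exact Subtype.ext e
      _ = lam n := by rw [h1]; exact h2
  inv_mem' := by
    intro a ha n
    have h1 := ha ⟨a⁻¹ * (n : G) * a, by simpa using hN.conj_mem n n.2 a⁻¹⟩
    have e : a * (a⁻¹ * (n : G) * a) * a⁻¹ = (n : G) := by group
    have : lam ⟨(n : G), by rw [← e]; exact hN.conj_mem _ (by simpa using hN.conj_mem n n.2 a⁻¹) a⟩
        = lam ⟨a⁻¹ * (n : G) * a, by simpa using hN.conj_mem n n.2 a⁻¹⟩ := by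
      rw [← h1]; congr 1; exact Subtype.ext e.symm
    simpa using this.symm

/-- Conjugate of a character of a normal subgroup by a group element. -/
def conjChar {G : Type} [Group G] {N : Subgroup G} (hN : N.Normal) (g : G) (lam : N → ℂ) :
    N → ℂ :=
  fun n => lam ⟨g * (n : G) * g⁻¹, hN.conj_mem n n.2 g⟩

open CategoryTheory Module MulAction

namespace Aux
variable {G : Type} [Group G]

def Invt (W : FDRep ℂ G) (p : Submodule ℂ W) : Prop := ∀ (g : G) x, x ∈ p → W.ρ g x ∈ p

noncomputable def subRep (W : FDRep ℂ G) (p : Submodule ℂ W) (hp : Invt W p) :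
    Representation ℂ G p where
  toFun g := (W.ρ g).restrict (fun x hx => hp g x hx)
  map_one' := by ext x; simp [LinearMap.restrict_apply]
  map_mul' g h := by ext x; simp [LinearMap.restrict_apply]

lemma subRep_apply (W : FDRep ℂ G) (p : Submodule ℂ W) (hp : Invt W p) (g : G) (x : p) :
    (subRep W p hp g x : W) = W.ρ g (x : W) := rfl

noncomputable def subFD (W : FDRep ℂ G) (p : Submodule ℂ W) (hp : Invt W p) : FDRep ℂ G :=
  FDRep.of (subRep W p hp)

noncomputable def incl (W : FDRep ℂ G) (p : Submodule ℂ W) (hp : Invt W p) : subFD W p hp ⟶ W where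
  hom := ConcreteCategory.ofHom p.subtype
  comm _ := rfl

lemma char_subFD (W : FDRep ℂ G) (p : Submodule ℂ W) (hp : Invt W p) (g : G) :
    (subFD W p hp).character g
      = LinearMap.trace ℂ p ((W.ρ g).restrict (fun x hx => hp g x hx)) := rfl

lemma char_add (W : FDRep ℂ G) (p q : Submodule ℂ W) (hp : Invt W p) (hq : Invt W q)
    (hc : IsCompl p q) (g : G) :
    W.character g = (subFD W p hp).character g + (subFD W q hq).character g := by
  classical
  set A : Bool → Submodule ℂ W := fun b => if b then p else q with hA
  have hint : DirectSum.IsInternal A := by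
    rw [DirectSum.isInternal_submodule_iff_isCompl A (i := true) (j := false) (by simp)
      (by ext b; cases b <;> simp)]
    simpa [hA] using hc
  have hf : ∀ b, Set.MapsTo (W.ρ g) (A b) (A b) := by
    intro b x hx
    cases b <;> simpa [hA] using by first
      | exact hq g x (by simpa [hA] using hx)
      | exact hp g x (by simpa [hA] using hx)
  have := LinearMap.trace_eq_sum_trace_restrict hint hf
  rw [show W.character g = LinearMap.trace ℂ W (W.ρ g) from rfl, this, Fintype.sum_bool]
  rw [char_subFD, char_subFD]
  congr 1

lemma exists_invt_compl [Finite G] (W : FDRep ℂ G) (p : Submodule ℂ W) (hp : Invt W p) :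
    ∃ q, Invt W q ∧ IsCompl p q := by
  classical
  letI : Fintype G := Fintype.ofFinite G
  obtain ⟨q₀, hq₀⟩ := Submodule.exists_isCompl p
  set π₀ : W →ₗ[ℂ] p := p.linearProjOfIsCompl q₀ hq₀ with hπ₀
  set π : W →ₗ[ℂ] p :=
    (Fintype.card G : ℂ)⁻¹ • ∑ g : G, (subRep W p hp g) ∘ₗ π₀ ∘ₗ (W.ρ g⁻¹) with hπ
  have hGne : (Fintype.card G : ℂ) ≠ 0 := by
    exact_mod_cast Fintype.card_ne_zero
  have hproj : ∀ x : p, π (x : W) = x := by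
    intro x
    have : ∀ g : G, ((subRep W p hp g) ∘ₗ π₀ ∘ₗ (W.ρ g⁻¹)) (x : W) = x := by
      intro g
      have hmem : W.ρ g⁻¹ (x : W) ∈ p := hp g⁻¹ _ x.2
      have h1 : π₀ (W.ρ g⁻¹ (x : W)) = ⟨W.ρ g⁻¹ (x : W), hmem⟩ := by
        rw [hπ₀]
        exact Submodule.linearProjOfIsCompl_apply_left hq₀ ⟨W.ρ g⁻¹ (x : W), hmem⟩
      ext
      simp only [LinearMap.comp_apply, h1, subRep_apply]
      rw [← LinearMap.comp_apply, ← Module.End.mul_eq_comp, ← map_mul]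
      simp
    simp only [hπ, LinearMap.smul_apply, LinearMap.sum_apply, this, Finset.sum_const,
      Finset.card_univ, smul_smul]
    rw [← Nat.cast_smul_eq_nsmul ℂ]
    rw [smul_smul, inv_mul_cancel₀ hGne, one_smul]
  have hequiv : ∀ (h : G) (x : W), π (W.ρ h x) = subRep W p hp h (π x) := by
    intro h x
    have : ∀ g : G, ((subRep W p hp g) ∘ₗ π₀ ∘ₗ (W.ρ g⁻¹)) (W.ρ h x)
        = subRep W p hp h (((subRep W p hp (h⁻¹ * g)) ∘ₗ π₀ ∘ₗ (W.ρ (h⁻¹ * g)⁻¹)) x) := by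
      intro g
      ext
      simp only [LinearMap.comp_apply, subRep_apply]
      rw [← LinearMap.comp_apply (W.ρ g⁻¹) (W.ρ h), ← Module.End.mul_eq_comp, ← map_mul]
      rw [← LinearMap.comp_apply (W.ρ h), ← Module.End.mul_eq_comp, ← map_mul]
      congr 2
      group
    simp only [hπ, LinearMap.smul_apply, LinearMap.sum_apply, this]
    rw [map_smul, map_sum]
    congr 1
    exact Fintype.sum_equiv (Equiv.mulLeft h⁻¹) _ _ (fun g => rfl)
  refine ⟨LinearMap.ker π, ?_, ?_⟩
  · intro g x hx
    have hx0 : π x = 0 := hx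
    simp only [LinearMap.mem_ker, hequiv, hx0, map_zero]
  · exact LinearMap.isCompl_of_proj hproj
lemma simple_of_min (X : FDRep ℂ G) (hne : ∃ x : X, x ≠ 0)
    (hmin : ∀ p : Submodule ℂ X, Invt X p → p = ⊥ ∨ p = ⊤) : Simple X := by
  constructor
  intro Y f hm
  constructor
  · intro hiso h0
    obtain ⟨x, hx⟩ := hne
    subst h0
    have hid : (𝟙 X : X ⟶ X) = 0 := by
      rw [← IsIso.inv_hom_id (0 : Y ⟶ X)]; simp
    apply hx
    have := congrArg (fun (φ : X ⟶ X) => φ.hom x) hid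
    exact this
  · intro hf0
    have hc : ∀ (g : G) (y : Y), f.hom (Y.ρ g y) = X.ρ g (f.hom y) := by
      intro g y
      exact ConcreteCategory.congr_hom (f.comm g) y
    -- the linear map underlying f
    have hfhom : (f.hom.hom.hom : Y →ₗ[ℂ] X) ≠ 0 := by
      intro h
      exact hf0 (Action.Hom.ext (FGModuleCat.hom_ext h))
    -- kernel is invariant in Y
    have hK : Invt Y (LinearMap.ker f.hom.hom.hom) := by
      intro g x hx
      simp only [LinearMap.mem_ker] at hx ⊢
      exact (hc g x).trans (by rw [show f.hom x = 0 from hx, map_zero])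
    -- incl composed with f is zero, hence ker = ⊥
    have hker : LinearMap.ker f.hom.hom.hom = ⊥ := by
      have hcomp : incl Y _ hK ≫ f = (0 : subFD Y _ hK ⟶ X) := by
        apply Action.Hom.ext
        ext ⟨v, hv⟩
        exact hv
      have h0 : incl Y _ hK = (0 : subFD Y _ hK ⟶ Y) := by
        have : incl Y _ hK ≫ f = (0 : subFD Y _ hK ⟶ Y) ≫ f := by simpa using hcomp
        exact Mono.right_cancellation _ _ this
      ext x
      simp only [Submodule.mem_bot, LinearMap.mem_ker]
      constructor
      · intro hx
        have := congrArg (fun (φ : subFD Y _ hK ⟶ Y) => φ.hom ⟨x, hx⟩) h0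
        exact this
      · rintro rfl; simp
    have hinj : Function.Injective f.hom := by
      rw [← LinearMap.ker_eq_bot]; exact hker
    -- range is invariant in X
    have hR : Invt X (LinearMap.range f.hom.hom.hom) := by
      rintro g _ ⟨y, rfl⟩
      exact ⟨Y.ρ g y, hc g y⟩
    have hsurj : Function.Surjective f.hom := by
      rcases hmin _ hR with h | h
      · exfalso; apply hfhom
        ext y
        have : f.hom y ∈ LinearMap.range f.hom.hom.hom := ⟨y, rfl⟩
        rw [h] at this
        exact (Submodule.mem_bot ℂ).mp this
      · rw [← LinearMap.range_eq_top]; exact h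
    set e := LinearEquiv.ofBijective (f.hom.hom.hom : Y →ₗ[ℂ] X) ⟨hinj, hsurj⟩ with he
    refine ⟨⟨⟨ConcreteCategory.ofHom e.symm.toLinearMap, ?_⟩, ?_, ?_⟩⟩
    · intro g
      apply FGModuleCat.hom_ext
      apply LinearMap.ext
      intro x
      apply hinj
      show f.hom (e.symm.toLinearMap ((X.ρ g) x)) = f.hom ((Y.ρ g) (e.symm.toLinearMap x))
      calc f.hom (e.symm.toLinearMap ((X.ρ g) x)) = (X.ρ g) x := e.apply_symm_apply _
        _ = (X.ρ g) (f.hom (e.symm.toLinearMap x)) := congrArg (X.ρ g) (e.apply_symm_apply x).symm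
        _ = f.hom ((Y.ρ g) (e.symm.toLinearMap x)) := (hc g _).symm
    · apply Action.Hom.ext
      rw [Action.comp_hom, Action.id_hom]
      apply FGModuleCat.hom_ext
      apply LinearMap.ext
      intro y
      exact e.symm_apply_apply y
    · apply Action.Hom.ext
      rw [Action.comp_hom, Action.id_hom]
      apply FGModuleCat.hom_ext
      apply LinearMap.ext
      intro x
      exact e.apply_symm_apply x
lemma decomp_aux [Finite G] (d : ℕ) : ∀ (W : FDRep ℂ G), finrank ℂ W = d →
    ∃ (n : ℕ) (V : Fin n → FDRep ℂ G), (∀ i, Simple (V i)) ∧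
      (∀ g, W.character g = ∑ i, (V i).character g) ∧
      (∀ i, 1 ≤ finrank ℂ (V i)) := by
  induction d using Nat.strong_induction_on with
  | _ d ih =>
    intro W hW
    classical
    rcases Nat.eq_zero_or_pos d with rfl | hd
    · refine ⟨0, ![], by simp, ?_, by simp⟩
      intro g
      have hss : Subsingleton W := by
        rw [← Module.finrank_zero_iff (R := ℂ) (M := W)]
        omega
      have h0 : W.ρ g = 0 := Subsingleton.elim _ _
      show LinearMap.trace ℂ _ (W.ρ g) = _
      rw [h0, map_zero]
      simp
    · have hnt : Nontrivial W := by
        rw [← Module.finrank_pos_iff (R := ℂ) (M := W)]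
        omega
      have hex : ∃ k, ∃ p : Submodule ℂ W, Invt W p ∧ p ≠ ⊥ ∧ finrank ℂ p = k :=
        ⟨finrank ℂ W, ⊤, fun g x _ => Submodule.mem_top, by
          intro h
          obtain ⟨x, y, hxy⟩ := hnt
          apply hxy
          have hx : x ∈ (⊥ : Submodule ℂ W) := h ▸ Submodule.mem_top
          have hy : y ∈ (⊥ : Submodule ℂ W) := h ▸ Submodule.mem_top
          simp only [Submodule.mem_bot] at hx hy
          rw [hx, hy], finrank_top ℂ W⟩
      obtain ⟨p, hpI, hpne, hpk⟩ := Nat.find_spec hex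
      set k₀ := Nat.find hex with hk₀
      have hk₀pos : 0 < k₀ := by
        rcases Nat.eq_zero_or_pos k₀ with h | h
        · exfalso; apply hpne
          rw [← Submodule.finrank_eq_zero (R := ℂ)]
          omega
        · exact h
      have hSimple : Simple (subFD W p hpI) := by
        apply simple_of_min
        · have hnt' : Nontrivial p := Submodule.nontrivial_iff_ne_bot.mpr hpne
          obtain ⟨x, y, hxy⟩ := hnt'
          refine ⟨x - y, ?_⟩
          intro h
          apply hxy
          have : x - y = (0 : p) := h
          rwa [sub_eq_zero] at this
        · intro r hr
          by_contra hcon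
          push_neg at hcon
          obtain ⟨hrb, hrt⟩ := hcon
          have hrI : Invt W (r.map p.subtype) := by
            rintro g _ ⟨y, hy, rfl⟩
            exact ⟨subRep W p hpI g y, hr g y hy, rfl⟩
          have hrb' : r.map p.subtype ≠ ⊥ := by
            intro h
            apply hrb
            ext x
            simp only [Submodule.mem_bot]
            constructor
            · intro hx
              have hmem : ((show p from x : p) : W) ∈ r.map p.subtype := ⟨x, hx, rfl⟩
              rw [h] at hmem
              simp only [Submodule.mem_bot] at hmem
              exact Subtype.ext hmem
            · rintro rfl; exact r.zero_mem
          have hlt : finrank ℂ (r.map p.subtype) < k₀ := by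
            rw [Submodule.finrank_map_subtype_eq (p := p) (q := r)]
            calc finrank ℂ r < finrank ℂ p :=
                  Submodule.finrank_lt hrt
              _ = k₀ := hpk
          exact Nat.find_min hex hlt ⟨_, hrI, hrb', rfl⟩
      obtain ⟨q, hqI, hq⟩ := exists_invt_compl W p hpI
      have hsum : finrank ℂ p + finrank ℂ q = d := by
        rw [← hW]; exact Submodule.finrank_add_eq_of_isCompl hq
      obtain ⟨n, V, hS, hchar, hrk⟩ := ih (finrank ℂ q) (by omega) (subFD W q hqI) rfl
      refine ⟨n+1, Fin.cons (subFD W p hpI) V, ?_, ?_, ?_⟩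
      · intro i
        refine Fin.cases ?_ ?_ i
        · exact hSimple
        · exact hS
      · intro g
        rw [Fin.sum_univ_succ]
        simp only [Fin.cons_zero, Fin.cons_succ]
        rw [char_add W p q hpI hqI hq g, hchar g]
      · intro i
        refine Fin.cases ?_ ?_ i
        · show 1 ≤ finrank ℂ (subFD W p hpI)
          rw [show finrank ℂ (subFD W p hpI) = finrank ℂ p from rfl]
          omega
        · exact hrk
noncomputable def pairing (G : Type) [Group G] [Fintype G] (χ ψ : G → ℂ) : ℂ :=
  (Fintype.card G : ℂ)⁻¹ * ∑ g, χ g * ψ g⁻¹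

lemma pairing_orth [Fintype G] (V W : FDRep ℂ G) [Simple V] [Simple W] :
    pairing G V.character W.character = if Nonempty (V ≅ W) then 1 else 0 := by
  haveI : Invertible (Nat.card G : ℂ) := invertibleOfNonzero (by exact_mod_cast Nat.card_pos.ne')
  have h := FDRep.char_orthonormal V W
  rw [Nat.card_eq_fintype_card] at h
  rw [pairing, h]

noncomputable def trivFD (G : Type) [Group G] : FDRep ℂ G := FDRep.of (Representation.trivial ℂ (G := G) (V := ℂ))

lemma trivFD_char (g : G) : (trivFD G).character g = 1 := by
  show LinearMap.trace ℂ ℂ (Representation.trivial ℂ (G := G) (V := ℂ) g) = 1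
  have : Representation.trivial ℂ (G := G) (V := ℂ) g = LinearMap.id := rfl
  rw [this, LinearMap.trace_id]
  simp

noncomputable def permFD (G : Type) [Group G] [Fintype G] (M : Subgroup G) : FDRep ℂ G :=
  FDRep.of (Representation.ofMulAction ℂ G (G ⧸ M))

lemma permFD_char [Fintype G] (M : Subgroup G) (g : G) :
    (permFD G M).character g = (Nat.card (fixedBy (G ⧸ M) g) : ℂ) := by
  show LinearMap.trace ℂ _ ((Representation.ofMulAction ℂ G (G ⧸ M)) g) = _
  rw [LinearMap.trace_eq_matrix_trace ℂ (MonoidAlgebra.basis (G ⧸ M) ℂ)]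
  rw [Matrix.trace]
  have hdiag : ∀ q : G ⧸ M,
      (LinearMap.toMatrix (MonoidAlgebra.basis (G ⧸ M) ℂ) (MonoidAlgebra.basis (G ⧸ M) ℂ)
        ((Representation.ofMulAction ℂ G (G ⧸ M)) g)).diag q
      = if g • q = q then (1 : ℂ) else 0 := by
    intro q
    rw [Matrix.diag_apply, LinearMap.toMatrix_apply]
    simp [MonoidAlgebra.basis, Finsupp.single_apply]
  simp only [hdiag]
  rw [Finset.sum_boole]
  have : Nat.card (fixedBy (G ⧸ M) g) = (Finset.univ.filter (fun q : G ⧸ M => g • q = q)).card := by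
    rw [Nat.card_eq_fintype_card]
    exact Fintype.card_subtype _
  rw [this]

lemma permChar_eq [Fintype G] (M : Subgroup G) (g : G) :
    permChar M g = (Nat.card (fixedBy (G ⧸ M) g) : ℂ) := by
  classical
  rw [permChar, indChar, finsum_eq_sum_of_fintype]
  have h2 : ∑ x : G, (if h : x * g * x⁻¹ ∈ M then (1:ℂ) else 0)
      = ∑ x : G, if x⁻¹ * g * x ∈ M then (1:ℂ) else 0 := by
    refine Fintype.sum_equiv (Equiv.inv G) _ _ ?_
    intro x
    show (if h : x * g * x⁻¹ ∈ M then (1:ℂ) else 0) = if (x⁻¹)⁻¹ * g * x⁻¹ ∈ M then (1:ℂ) else 0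
    simp only [dite_eq_ite, inv_inv]
  rw [h2, Finset.sum_boole]
  have hset : ∀ x : G, (x⁻¹ * g * x ∈ M) ↔ (QuotientGroup.mk x ∈ fixedBy (G ⧸ M) g) := by
    intro x
    rw [mem_fixedBy]
    have : g • (QuotientGroup.mk x : G ⧸ M) = QuotientGroup.mk (g * x) := by
      rw [← smul_eq_mul, MulAction.Quotient.smul_mk]
    rw [this, QuotientGroup.eq]
    constructor
    · intro h
      have := M.inv_mem h
      have he : (x⁻¹ * g * x)⁻¹ = (g * x)⁻¹ * x := by group
      rwa [he] at this
    · intro h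
      have := M.inv_mem h
      have he : ((g * x)⁻¹ * x)⁻¹ = x⁻¹ * g * x := by group
      rwa [he] at this
  have h3 : (Finset.univ.filter (fun x : G => x⁻¹ * g * x ∈ M)).card
      = Nat.card M * Nat.card (fixedBy (G ⧸ M) g) := by
    have hpre : {x : G | x⁻¹ * g * x ∈ M} = QuotientGroup.mk ⁻¹' (fixedBy (G ⧸ M) g) := by
      ext x; exact hset x
    have hc1 : (Finset.univ.filter (fun x : G => x⁻¹ * g * x ∈ M)).card
        = Nat.card {x : G | x⁻¹ * g * x ∈ M} := by
      rw [Nat.card_eq_fintype_card]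
      exact (Fintype.card_subtype _).symm
    rw [hc1, hpre, Nat.card_congr (QuotientGroup.preimageMkEquivSubgroupProdSet M _),
      Nat.card_prod]
  rw [h3]
  have hM : (Nat.card M : ℂ) ≠ 0 := by
    simp [Nat.card_pos.ne']
  push_cast
  rw [← mul_assoc, inv_mul_cancel₀ hM, one_mul]

lemma burnside [Fintype G] (M : Subgroup G) :
    ∑ g : G, (Nat.card (fixedBy (G ⧸ M) g) : ℕ) = Fintype.card G := by
  classical
  have h := MulAction.sum_card_fixedBy_eq_card_orbits_mul_card_group G (G ⧸ M)
  have horb : Fintype.card (Quotient (orbitRel G (G ⧸ M))) = 1 := by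
    have hsub : Subsingleton (orbitRel.Quotient G (G ⧸ M)) :=
      (MulAction.pretransitive_iff_subsingleton_quotient G (G ⧸ M)).mp inferInstance
    have hne : Nonempty (orbitRel.Quotient G (G ⧸ M)) :=
      ⟨Quotient.mk _ (QuotientGroup.mk 1)⟩
    have h1 : Fintype.card (orbitRel.Quotient G (G ⧸ M)) ≤ 1 :=
      Fintype.card_le_one_iff_subsingleton.mpr hsub
    have h2 : 0 < Fintype.card (orbitRel.Quotient G (G ⧸ M)) := Fintype.card_pos
    show Fintype.card (orbitRel.Quotient G (G ⧸ M)) = 1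
    omega
  rw [horb, one_mul] at h
  rw [← h]
  congr 1
  ext g
  rw [Nat.card_eq_fintype_card]

lemma trivFD_simple : Simple (trivFD G) := by
  apply simple_of_min
  · show ∃ x : ℂ, x ≠ 0
    exact ⟨1, one_ne_zero⟩
  · intro p _
    rcases eq_or_ne p ⊥ with h | h
    · exact Or.inl h
    · right
      obtain ⟨c, hc, hc0⟩ : ∃ c : ℂ, c ∈ p ∧ c ≠ 0 := by
        by_contra hcon
        push_neg at hcon
        apply h
        ext x
        change x ∈ p ↔ x = 0
        constructor
        · intro hx; exact hcon x hx
        · rintro rfl; exact p.zero_mem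
      rw [Submodule.eq_top_iff']
      intro x
      let x' : ℂ := x
      have hm := p.smul_mem (x' * c⁻¹) hc
      have he : (x' * c⁻¹) • c = x' := by
        show (x' * c⁻¹) * c = x'
        field_simp
      convert hm using 1
      exact he.symm

lemma indChar_one [Fintype G] (H : Subgroup G) (φ : H → ℂ) (hφ : φ 1 = 1) :
    indChar H φ 1 = (Nat.card H : ℂ)⁻¹ * (Fintype.card G : ℂ) := by
  rw [indChar, finsum_eq_sum_of_fintype]
  congr 1
  have hval : ∀ x : G, (if h : x * 1 * x⁻¹ ∈ H then φ ⟨x * 1 * x⁻¹, h⟩ else 0) = 1 := by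
    intro x
    have hmem : x * 1 * x⁻¹ ∈ H := by
      have hx : x * 1 * x⁻¹ = 1 := by group
      rw [hx]; exact H.one_mem
    rw [dif_pos hmem]
    have h1 : (⟨x * 1 * x⁻¹, hmem⟩ : H) = 1 := Subtype.ext (by simp)
    rw [h1, hφ]
  rw [Finset.sum_congr rfl (fun x _ => hval x)]
  simp

lemma indChar_top [Fintype G] (φ : (⊤ : Subgroup G) → ℂ) (hφ : IsLinearChar ⊤ φ) (g : G) :
    indChar (⊤ : Subgroup G) φ g = φ ⟨g, trivial⟩ := by
  rw [indChar, finsum_eq_sum_of_fintype]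
  have hval : ∀ x : G, (if h : x * g * x⁻¹ ∈ (⊤ : Subgroup G) then φ ⟨x * g * x⁻¹, h⟩ else 0)
      = φ ⟨g, trivial⟩ := by
    intro x
    rw [dif_pos (Subgroup.mem_top (x * g * x⁻¹))]
    have h1 : (⟨x * g * x⁻¹, trivial⟩ : (⊤ : Subgroup G))
        = ⟨x, trivial⟩ * ⟨g, trivial⟩ * ⟨x⁻¹, trivial⟩ := rfl
    rw [h1, hφ.2, hφ.2]
    have h2 : φ ⟨x, trivial⟩ * φ ⟨x⁻¹, trivial⟩ = 1 := by
      rw [← hφ.2]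
      have h3 : (⟨x, trivial⟩ * ⟨x⁻¹, trivial⟩ : (⊤ : Subgroup G)) = 1 := Subtype.ext (by simp)
      rw [h3, hφ.1]
    calc φ ⟨x, trivial⟩ * φ ⟨g, trivial⟩ * φ ⟨x⁻¹, trivial⟩
        = φ ⟨g, trivial⟩ * (φ ⟨x, trivial⟩ * φ ⟨x⁻¹, trivial⟩) := by ring
      _ = φ ⟨g, trivial⟩ := by rw [h2, mul_one]
  rw [Finset.sum_congr rfl (fun x _ => hval x)]
  simp only [Finset.sum_const, Finset.card_univ, nsmul_eq_mul]
  have hGtop : (Nat.card (⊤ : Subgroup G) : ℂ) = (Fintype.card G : ℂ) := by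
    rw [Subgroup.card_top, Nat.card_eq_fintype_card]
  rw [hGtop, inv_mul_cancel_left₀ (by exact_mod_cast Fintype.card_ne_zero)]

end Aux

/-- If `G` is a finite nonabelian simple group and `M` is a proper subgroup of maximal order
among proper subgroups, then `(1_M)^G` has a nonprincipal irreducible constituent, and no
nonprincipal irreducible constituent of `(1_M)^G` is monomial. -/
theorem stmt0 {G : Type} [Group G] [Finite G] [IsSimpleGroup G]
    (hna : ¬ ∀ a b : G, a * b = b * a)
    (M : Subgroup G) (hM : M ≠ ⊤)
    (hmax : ∀ K : Subgroup G, K ≠ ⊤ → Nat.card K ≤ Nat.card M) :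
    (∃ χ : G → ℂ, IsConstituent G χ (permChar M) ∧ χ ≠ fun _ => 1) ∧
    ∀ χ : G → ℂ, IsConstituent G χ (permChar M) → χ ≠ (fun _ => 1) → ¬ IsMonomial G χ := by
  classical
  letI : Fintype G := Fintype.ofFinite G
  open Aux CategoryTheory Module MulAction in

  · have hGne : (Fintype.card G : ℂ) ≠ 0 := by exact_mod_cast Fintype.card_ne_zero
    -- decomposition of the permutation representation
    obtain ⟨n, V, hSimp, hchar, hrk⟩ :=
      Aux.decomp_aux (Module.finrank ℂ (Aux.permFD G M)) (Aux.permFD G M) rfl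
    -- conversion between charInner and pairing
    have hfix : ∀ g : G, MulAction.fixedBy (G ⧸ M) g⁻¹ = MulAction.fixedBy (G ⧸ M) g := by
      intro g
      ext q
      rw [MulAction.mem_fixedBy, MulAction.mem_fixedBy, inv_smul_eq_iff, eq_comm]
    have hconv : ∀ χ : G → ℂ,
        charInner G χ (permChar M) = Aux.pairing G χ (Aux.permFD G M).character := by
      intro χ
      rw [charInner, Aux.pairing, finsum_eq_sum_of_fintype, Nat.card_eq_fintype_card]
      congr 1
      apply Finset.sum_congr rfl
      intro g _
      congr 1
      rw [Aux.permChar_eq M g, Aux.permFD_char M g⁻¹, map_natCast, hfix g]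
    -- pairing against the decomposition counts isomorphic constituents
    have hpair : ∀ X : FDRep ℂ G, CategoryTheory.Simple X →
        Aux.pairing G X.character (Aux.permFD G M).character
          = ((Finset.univ.filter (fun i : Fin n => Nonempty (X ≅ V i))).card : ℂ) := by
      intro X hX
      haveI := hX
      have hsplit : Aux.pairing G X.character (Aux.permFD G M).character
          = ∑ i, Aux.pairing G X.character (V i).character := by
        rw [Aux.pairing]
        have h1 : ∀ g : G, X.character g * (Aux.permFD G M).character g⁻¹
            = ∑ i, X.character g * (V i).character g⁻¹ := by
          intro g
          rw [hchar g⁻¹, Finset.mul_sum]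
        calc (Fintype.card G : ℂ)⁻¹ * ∑ g, X.character g * (Aux.permFD G M).character g⁻¹
            = (Fintype.card G : ℂ)⁻¹ * ∑ g : G, ∑ i, X.character g * (V i).character g⁻¹ := by
              rw [Finset.sum_congr rfl (fun g _ => h1 g)]
          _ = (Fintype.card G : ℂ)⁻¹ * ∑ i, ∑ g : G, X.character g * (V i).character g⁻¹ := by
              rw [Finset.sum_comm]
          _ = ∑ i, (Fintype.card G : ℂ)⁻¹ * ∑ g : G, X.character g * (V i).character g⁻¹ := by
              rw [Finset.mul_sum]
          _ = ∑ i, Aux.pairing G X.character (V i).character := rfl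
      rw [hsplit]
      have horth : ∀ i : Fin n, Aux.pairing G X.character (V i).character
          = if Nonempty (X ≅ V i) then (1 : ℂ) else 0 := by
        intro i
        haveI := hSimp i
        exact Aux.pairing_orth X (V i)
      rw [Finset.sum_congr rfl (fun i _ => horth i)]
      rw [Finset.sum_boole]
    -- the trivial character appears exactly once
    have hone : Aux.pairing G (Aux.trivFD G).character (Aux.permFD G M).character = 1 := by
      rw [Aux.pairing]
      have h1 : ∀ g : G, (Aux.trivFD G).character g * (Aux.permFD G M).character g⁻¹
          = ((Nat.card (MulAction.fixedBy (G ⧸ M) g⁻¹) : ℂ)) := by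
        intro g
        rw [Aux.trivFD_char, Aux.permFD_char, one_mul]
      rw [Finset.sum_congr rfl (fun g _ => h1 g)]
      have h2 : ∑ g : G, ((Nat.card (MulAction.fixedBy (G ⧸ M) g⁻¹) : ℂ))
          = ∑ g : G, ((Nat.card (MulAction.fixedBy (G ⧸ M) g) : ℂ)) :=
        Fintype.sum_equiv (Equiv.inv G) _ _ (fun g => rfl)
      rw [h2, ← Nat.cast_sum, Aux.burnside M]
      exact inv_mul_cancel₀ hGne
    have htriv : (Finset.univ.filter (fun i : Fin n => Nonempty (Aux.trivFD G ≅ V i))).card = 1 := by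
      have h := hpair (Aux.trivFD G) Aux.trivFD_simple
      rw [hone] at h
      exact_mod_cast h.symm
    -- characterization of trivial constituents
    have hiff : ∀ i : Fin n,
        ((V i).character = fun _ => (1 : ℂ)) ↔ Nonempty (Aux.trivFD G ≅ V i) := by
      intro i
      constructor
      · intro h
        haveI := hSimp i
        haveI := Aux.trivFD_simple (G := G)
        have hp := Aux.pairing_orth (Aux.trivFD G) (V i)
        rw [Aux.pairing] at hp
        have h3 : ∀ g : G, (Aux.trivFD G).character g * (V i).character g⁻¹ = 1 := by
          intro g
          rw [Aux.trivFD_char, h]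
          simp
        rw [Finset.sum_congr rfl (fun g _ => h3 g)] at hp
        simp only [Finset.sum_const, Finset.card_univ, nsmul_eq_mul, mul_one] at hp
        rw [inv_mul_cancel₀ hGne] at hp
        by_contra hcon
        rw [if_neg hcon] at hp
        exact one_ne_zero hp
      · rintro ⟨iso⟩
        funext g
        rw [← FDRep.char_iso iso, Aux.trivFD_char]
    -- dimension bookkeeping
    have hNge2 : 2 ≤ Nat.card (G ⧸ M) := by
      have h0 : M.index ≠ 0 := Subgroup.index_ne_zero_of_finite
      have h1 : M.index ≠ 1 := fun h => hM (Subgroup.index_eq_one.mp h)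
      have : M.index = Nat.card (G ⧸ M) := rfl
      omega
    have hrkP : Module.finrank ℂ (Aux.permFD G M) = Nat.card (G ⧸ M) := by
      show Module.finrank ℂ (MonoidAlgebra ℂ (G ⧸ M)) = Nat.card (G ⧸ M)
      rw [Module.finrank_eq_card_basis (MonoidAlgebra.basis (G ⧸ M) ℂ), Nat.card_eq_fintype_card]
    have hsumrk : ∑ i, Module.finrank ℂ (V i) = Nat.card (G ⧸ M) := by
      have h1 := hchar 1
      rw [FDRep.char_one] at h1
      have h2 : ∀ i : Fin n, (V i).character 1 = ((Module.finrank ℂ (V i) : ℂ)) := fun i =>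
        FDRep.char_one (V i)
      rw [Finset.sum_congr rfl (fun i _ => h2 i)] at h1
      rw [hrkP] at h1
      exact_mod_cast h1.symm
    -- there is a nontrivial constituent
    have hex_j : ∃ j : Fin n, (V j).character ≠ fun _ => (1 : ℂ) := by
      by_contra hcon
      push_neg at hcon
      have hfilt : (Finset.univ.filter (fun i : Fin n => Nonempty (Aux.trivFD G ≅ V i)))
          = Finset.univ := by
        apply Finset.filter_true_of_mem
        intro i _
        exact (hiff i).mp (hcon i)
      rw [hfilt, Finset.card_univ, Fintype.card_fin] at htriv
      subst htriv
      have h1 := hsumrk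
      rw [Fin.sum_univ_one] at h1
      have h2 : Module.finrank ℂ (V 0) = 1 := by
        have := congrFun (hcon 0) 1
        rw [FDRep.char_one (V 0)] at this
        exact_mod_cast this
      omega
    obtain ⟨j, hj⟩ := hex_j
    constructor
    · -- part 1
      refine ⟨(V j).character, ⟨⟨V j, hSimp j, rfl⟩, ?_⟩, hj⟩
      rw [hconv, hpair (V j) (hSimp j)]
      have hmem : j ∈ Finset.univ.filter (fun i : Fin n => Nonempty (V j ≅ V i)) := by
        simp only [Finset.mem_filter, Finset.mem_univ, true_and]
        exact ⟨Iso.refl _⟩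
      have := Finset.card_ne_zero_of_mem hmem
      exact_mod_cast this
    · -- part 2
      rintro χ ⟨⟨X, hXS, rfl⟩, hnz⟩ hne1 ⟨H, φ, hlin, hmono⟩
      rw [hconv, hpair X hXS] at hnz
      have hjex : ∃ j', Nonempty (X ≅ V j') := by
        by_contra hcon
        push_neg at hcon
        apply hnz
        rw [Finset.filter_false_of_mem (fun i _ => not_nonempty_iff.mpr (hcon i)), Finset.card_empty]
        norm_num
      obtain ⟨j', ⟨isoXj⟩⟩ := hjex
      have hχj : X.character = (V j').character := FDRep.char_iso isoXj
      obtain ⟨i₀, hi₀mem⟩ := Finset.card_pos.mp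
        (by rw [htriv]; norm_num :
          0 < (Finset.univ.filter (fun i : Fin n => Nonempty (Aux.trivFD G ≅ V i))).card)
      have hi₀ : Nonempty (Aux.trivFD G ≅ V i₀) := (Finset.mem_filter.mp hi₀mem).2
      have hchari₀ : (V i₀).character = fun _ => (1 : ℂ) := (hiff i₀).mpr hi₀
      have hrk_i₀ : Module.finrank ℂ (V i₀) = 1 := by
        have := congrFun hchari₀ 1
        rw [FDRep.char_one (V i₀)] at this
        exact_mod_cast this
      have hjne : j' ≠ i₀ := by
        rintro rfl
        exact hne1 (hχj.trans hchari₀)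
      have hbound : Module.finrank ℂ (V j') + 1 ≤ Nat.card (G ⧸ M) := by
        rw [← hsumrk, ← hrk_i₀]
        have hsub : ({j', i₀} : Finset (Fin n)).sum (fun i => Module.finrank ℂ (V i))
            ≤ ∑ i, Module.finrank ℂ (V i) :=
          Finset.sum_le_sum_of_subset (Finset.subset_univ _)
        rwa [Finset.sum_pair hjne] at hsub
      -- degree of the monomial character
      have hchi1 : X.character 1 = ((Module.finrank ℂ (V j') : ℂ)) := by
        rw [hχj]; exact FDRep.char_one (V j')
      have hmono1 := congrFun hmono 1
      rw [Aux.indChar_one H φ hlin.1] at hmono1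
      have hHpos : 0 < Nat.card H := Nat.card_pos
      have hHne : (Nat.card H : ℂ) ≠ 0 := by
        exact_mod_cast hHpos.ne'
      have hkeyN : Module.finrank ℂ (V j') * Nat.card H = Nat.card G := by
        have hc : ((Module.finrank ℂ (V j') : ℂ)) * Nat.card H = ((Nat.card G : ℂ)) := by
          rw [← hchi1, hmono1, Nat.card_eq_fintype_card]
          field_simp
          rw [Nat.card_eq_fintype_card]
        exact_mod_cast hc
      have hHidx : Nat.card H * H.index = Nat.card G := H.card_mul_index
      have hMidx : Nat.card M * M.index = Nat.card G := M.card_mul_index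
      have hidxM : M.index = Nat.card (G ⧸ M) := rfl
      have hrkj : Module.finrank ℂ (V j') = H.index := by
        have : Module.finrank ℂ (V j') * Nat.card H = H.index * Nat.card H := by
          rw [hkeyN, mul_comm (H.index)]
          exact hHidx.symm
        exact Nat.eq_of_mul_eq_mul_right hHpos this
      have hidxlt : H.index < M.index := by omega
      have hMpos : 0 < Nat.card M := Nat.card_pos
      have hcardlt : Nat.card M < Nat.card H := by
        by_contra hle
        push_neg at hle
        have h1 : Nat.card H * H.index ≤ Nat.card M * H.index :=
          Nat.mul_le_mul_right _ hle
        have h2 : Nat.card M * H.index < Nat.card M * M.index :=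
          mul_lt_mul_of_pos_left hidxlt hMpos
        omega
      have hHtop : H = ⊤ := by
        by_contra hHne'
        have := hmax H hHne'
        omega
      subst hHtop
      -- now χ is a homomorphism G → ℂ
      have hchif : ∀ g : G, X.character g = φ ⟨g, trivial⟩ := by
        intro g
        rw [congrFun hmono g, Aux.indChar_top φ hlin g]
      have hfmul : ∀ a b : G, φ ⟨a * b, trivial⟩ = φ ⟨a, trivial⟩ * φ ⟨b, trivial⟩ := by
        intro a b
        have h1 : (⟨a * b, trivial⟩ : (⊤ : Subgroup G)) = ⟨a, trivial⟩ * ⟨b, trivial⟩ := rfl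
        rw [h1, hlin.2]
      have hf1 : φ ⟨(1 : G), trivial⟩ = 1 := by
        have h1 : (⟨(1 : G), trivial⟩ : (⊤ : Subgroup G)) = 1 := rfl
        rw [h1, hlin.1]
      have hfinv : ∀ a : G, φ ⟨a, trivial⟩ * φ ⟨a⁻¹, trivial⟩ = 1 := by
        intro a
        rw [← hfmul]
        have h1 : a * a⁻¹ = 1 := mul_inv_cancel a
        calc φ ⟨a * a⁻¹, trivial⟩ = φ ⟨(1 : G), trivial⟩ := by
              congr 1
              exact Subtype.ext h1
          _ = 1 := hf1
      set K : Subgroup G :=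
        { carrier := {g : G | φ ⟨g, trivial⟩ = 1}
          one_mem' := hf1
          mul_mem' := by
            intro a b ha hb
            show φ ⟨a * b, trivial⟩ = 1
            rw [hfmul, ha, hb, one_mul]
          inv_mem' := by
            intro a ha
            show φ ⟨a⁻¹, trivial⟩ = 1
            have := hfinv a
            rw [show φ ⟨a, trivial⟩ = 1 from ha, one_mul] at this
            exact this } with hK
      have hKnormal : K.Normal := by
        constructor
        intro x hx g
        show φ ⟨g * x * g⁻¹, trivial⟩ = 1
        have h1 : (⟨g * x * g⁻¹, trivial⟩ : (⊤ : Subgroup G))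
            = ⟨g * x, trivial⟩ * ⟨g⁻¹, trivial⟩ := rfl
        rw [h1, hlin.2, hfmul]
        rw [show φ ⟨x, trivial⟩ = 1 from hx, mul_one]
        exact hfinv g
      rcases IsSimpleGroup.eq_bot_or_eq_top_of_normal K hKnormal with hbot | htop
      · apply hna
        have hinj : ∀ x y : G, φ ⟨x, trivial⟩ = φ ⟨y, trivial⟩ → x = y := by
          intro x y hxy
          have h1 : φ ⟨x * y⁻¹, trivial⟩ = 1 := by
            rw [hfmul, hxy]
            exact hfinv y
          have h2 : x * y⁻¹ ∈ K := h1
          rw [hbot] at h2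
          have h3 : x * y⁻¹ = 1 := by simpa using h2
          have := mul_eq_one_iff_eq_inv.mp h3
          simpa using this
        intro a b
        apply hinj
        rw [hfmul, hfmul, mul_comm]
      · apply hne1
        funext g
        rw [hchif g]
        exact (show g ∈ K from htop ▸ Subgroup.mem_top g)
end

section
/- Let G be a finite group with a normal π-complement H (a normal Hall π'-subgroup). Then for every maximal subgroup M of G with |G : M| a π-number and every irreducible constituent χ of (1_M)^G, H is contained in ker χ and χ(1) is a π-number. -/
open scoped BigOperators Classical

open Polynomial Module

lemma my_eval_charpoly {n : Type} [Fintype n] [DecidableEq n] {R : Type} [CommRing R]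
    (A : Matrix n n R) (c : R) :
    (Matrix.charpoly A).eval c = (c • (1 : Matrix n n R) - A).det := by
  rw [Matrix.charpoly, ← Polynomial.coe_evalRingHom, RingHom.map_det]
  congr 1
  ext i j
  by_cases h : i = j
  · subst h; simp [Matrix.charmatrix_apply_eq, Matrix.one_apply]
  · simp [Matrix.charmatrix_apply_ne _ _ _ h, Matrix.one_apply, h]

lemma my_trace_integral {n : Type} [Fintype n] [DecidableEq n]
    (A : Matrix n n ℂ) (m : ℕ) (hm : m ≠ 0) (hA : A ^ m = 1) :
    IsIntegral ℤ A.trace := by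
  rw [Matrix.trace_eq_sum_roots_charpoly]
  have hroot : ∀ μ ∈ (Matrix.charpoly A).roots, IsIntegral ℤ μ := by
    intro μ hμ
    have hIsRoot : (Matrix.charpoly A).IsRoot μ := Polynomial.isRoot_of_mem_roots hμ
    have hdet : (μ • (1 : Matrix n n ℂ) - A).det = 0 := by
      rw [← my_eval_charpoly]; exact hIsRoot
    obtain ⟨v, hv0, hv⟩ := Matrix.exists_mulVec_eq_zero_iff.mpr hdet
    have hAv : A.mulVec v = μ • v := by
      have := hv
      rw [Matrix.sub_mulVec, sub_eq_zero] at this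
      rw [← this, Matrix.smul_mulVec, Matrix.one_mulVec]
    have hpow : ∀ k : ℕ, (A ^ k).mulVec v = μ ^ k • v := by
      intro k
      induction k with
      | zero => simp [Matrix.one_mulVec]
      | succ k ih =>
        rw [pow_succ, ← Matrix.mulVec_mulVec, hAv, Matrix.mulVec_smul, ih, smul_smul]
        rw [pow_succ]; ring_nf
    have h1 : μ ^ m = 1 := by
      have := hpow m
      rw [hA, Matrix.one_mulVec] at this
      obtain ⟨i, hi⟩ := Function.ne_iff.mp hv0
      have := congrFun this i
      simp only [Pi.smul_apply, smul_eq_mul] at this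
      have h2 : μ ^ m * v i = 1 * v i := by rw [one_mul]; exact this.symm
      exact mul_right_cancel₀ hi h2
    refine ⟨X ^ m - 1, ?_, ?_⟩
    · simpa using Polynomial.monic_X_pow_sub_C (1 : ℤ) hm
    · simp [Polynomial.eval₂_sub, h1]
  show (Matrix.charpoly A).roots.sum ∈ integralClosure ℤ ℂ
  exact Subalgebra.multiset_sum_mem _ (fun x hx => hroot x hx)

lemma my_char_integral {K V : Type} [Group K] [Finite K] [AddCommGroup V] [Module ℂ V]
    [FiniteDimensional ℂ V] (ρ : Representation ℂ K V) (k : K) :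
    IsIntegral ℤ (LinearMap.trace ℂ V (ρ k)) := by
  classical
  letI : Fintype K := Fintype.ofFinite K
  let b := Module.finBasis ℂ V
  have htr : LinearMap.trace ℂ V (ρ k) = (LinearMap.toMatrixAlgEquiv b (ρ k)).trace :=
    LinearMap.trace_eq_matrix_trace ℂ b (ρ k)
  rw [htr]
  refine my_trace_integral _ (Fintype.card K) Fintype.card_ne_zero ?_
  have hord : (ρ k) ^ (Fintype.card K) = 1 := by
    rw [← map_pow, pow_card_eq_one, map_one]
  rw [← map_pow, hord, map_one]

lemma my_conj_trace {K V : Type} [Group K] [AddCommGroup V] [Module ℂ V]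
    [FiniteDimensional ℂ V] (ρ : Representation ℂ K V) (g x : K) :
    LinearMap.trace ℂ V (ρ (g * x * g⁻¹)) = LinearMap.trace ℂ V (ρ x) := by
  calc LinearMap.trace ℂ V (ρ (g * x * g⁻¹))
      = LinearMap.trace ℂ V (ρ (g * x) * ρ g⁻¹) := by rw [map_mul]
    _ = LinearMap.trace ℂ V (ρ g⁻¹ * ρ (g * x)) := LinearMap.trace_mul_comm ℂ _ _
    _ = LinearMap.trace ℂ V (ρ x) := by
        rw [← map_mul]
        congr 1
        group

/-- The degree of a simple representation divides the order of the group. -/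
lemma my_dvd_lemma {K V : Type} [Group K] [Finite K] [AddCommGroup V] [Module ℂ V]
    [FiniteDimensional ℂ V] (ρ : Representation ℂ K V)
    (v₀ : V) (hv₀ : v₀ ≠ 0)
    (h1 : ∀ f : Module.End ℂ V, (∀ k, f * ρ k = ρ k * f) → ∃ c : ℂ, f = c • (1 : Module.End ℂ V))
    (h2 : ∀ p : Submodule ℂ V, (∀ k : K, ∀ x ∈ p, ρ k x ∈ p) → p = ⊥ ∨ p = ⊤)
    (h3 : ∑ᶠ k : K, (LinearMap.trace ℂ V) (ρ k⁻¹) * (LinearMap.trace ℂ V) (ρ k)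
        = (Nat.card K : ℂ)) :
    Module.finrank ℂ V ∣ Nat.card K := by
  classical
  letI : Fintype K := Fintype.ofFinite K
  set χ : K → ℂ := fun k => LinearMap.trace ℂ V (ρ k) with hχdef
  set d : ℕ := Module.finrank ℂ V with hd
  have hd0 : d ≠ 0 := by
    haveI : Nontrivial V := nontrivial_of_ne v₀ 0 hv₀
    exact Module.finrank_pos.ne'
  set N : ℕ := Nat.card K with hN
  -- the central operator T
  set T : Module.End ℂ V := ∑ k : K, χ k⁻¹ • (ρ k : Module.End ℂ V) with hT
  have hTcomm : ∀ g, T * ρ g = ρ g * T := by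
    intro g
    rw [hT, Finset.sum_mul, Finset.mul_sum]
    refine Fintype.sum_bijective (fun k => g⁻¹ * k * g)
      ((Equiv.trans (Equiv.mulLeft g⁻¹) (Equiv.mulRight g)).bijective) _ _ ?_
    intro k
    have e1 : χ ((g⁻¹ * k * g)⁻¹) = χ k⁻¹ := by
      rw [show (g⁻¹ * k * g)⁻¹ = g⁻¹ * k⁻¹ * (g⁻¹)⁻¹ by group]
      exact my_conj_trace ρ g⁻¹ k⁻¹
    have e2 : ρ g * ρ (g⁻¹ * k * g) = ρ k * ρ g := by
      rw [← map_mul, ← map_mul]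
      congr 1
      group
    rw [e1, smul_mul_assoc, mul_smul_comm, e2]
  obtain ⟨c, hc⟩ := h1 T hTcomm
  -- trace computation
  have htraceT : LinearMap.trace ℂ V T = (N : ℂ) := by
    rw [hT, map_sum]
    rw [← h3, finsum_eq_sum_of_fintype]
    exact Finset.sum_congr rfl (fun k _ => by rw [map_smul, smul_eq_mul])
  have hcd : c * (d : ℂ) = (N : ℂ) := by
    rw [← htraceT, hc, map_smul, smul_eq_mul]
    rw [show (1 : Module.End ℂ V) = LinearMap.id from rfl, LinearMap.trace_id]
  -- the regular representation on K → ℂ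
  set L : K → ((K → ℂ) →ₗ[ℂ] (K → ℂ)) := fun g => LinearMap.funLeft ℂ ℂ (fun x => g⁻¹ * x)
    with hL
  set φ : (K → ℂ) →ₗ[ℂ] V :=
    { toFun := fun h => ∑ k : K, h k • (ρ k v₀),
      map_add' := by
        intro a b
        simp only [Pi.add_apply, add_smul]
        rw [Finset.sum_add_distrib],
      map_smul' := by
        intro r a
        simp only [Pi.smul_apply, smul_eq_mul, RingHom.id_apply, ← smul_smul]
        rw [Finset.smul_sum] } with hφ
  have hφapp : ∀ h : K → ℂ, φ h = ∑ k : K, h k • (ρ k v₀) := fun h => rfl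
  have hφL : ∀ (g : K) (h : K → ℂ), φ (L g h) = ρ g (φ h) := by
    intro g h
    rw [hφapp, hφapp, map_sum]
    refine Fintype.sum_bijective (fun j => g⁻¹ * j) (Equiv.mulLeft g⁻¹).bijective _ _ ?_
    intro j
    simp only [hL, LinearMap.funLeft_apply]
    rw [map_smul]
    congr 1
    rw [← Module.End.mul_apply, ← map_mul, mul_inv_cancel_left]
  have hsurj : Function.Surjective φ := by
    have hinv : ∀ k : K, ∀ x ∈ LinearMap.range φ, ρ k x ∈ LinearMap.range φ := by
      rintro k x ⟨h, rfl⟩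
      exact ⟨L k h, hφL k h⟩
    have hne : LinearMap.range φ ≠ ⊥ := by
      intro hb
      have hv₀mem : v₀ ∈ LinearMap.range φ := by
        refine ⟨(Pi.single 1 1 : K → ℂ), ?_⟩
        rw [hφapp]
        have : ∀ k : K, ((Pi.single 1 1 : K → ℂ)) k • (ρ k v₀)
            = if k = 1 then ρ k v₀ else 0 := by
          intro k
          by_cases hk : k = 1
          · subst hk; simp
          · simp [Pi.single_apply, hk]
        rw [Finset.sum_congr rfl (fun k _ => this k), Finset.sum_ite_eq' Finset.univ 1]
        simp
      rw [hb] at hv₀mem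
      exact hv₀ (Submodule.mem_bot ℂ |>.mp hv₀mem)
    rcases h2 (LinearMap.range φ) hinv with h | h
    · exact absurd h hne
    · exact LinearMap.range_eq_top.mp h
  set S : Module.End ℂ (K → ℂ) := ∑ k : K, χ k⁻¹ • (L k) with hS
  have hφS : ∀ h : K → ℂ, φ (S h) = c • φ h := by
    intro h
    have : S h = ∑ k : K, χ k⁻¹ • (L k h) := by
      rw [hS, LinearMap.sum_apply]
      exact Finset.sum_congr rfl (fun k _ => rfl)
    rw [this, map_sum]
    have : ∀ k : K, φ (χ k⁻¹ • L k h) = χ k⁻¹ • (ρ k (φ h)) := by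
      intro k
      rw [map_smul, hφL]
    rw [Finset.sum_congr rfl (fun k _ => this k)]
    have : (∑ k : K, χ k⁻¹ • (ρ k : Module.End ℂ V)) (φ h) = ∑ k : K, χ k⁻¹ • (ρ k (φ h)) := by
      rw [LinearMap.sum_apply]
      exact Finset.sum_congr rfl (fun k _ => rfl)
    rw [← this, ← hT, hc]
    rfl
  -- find an eigenvector of S with eigenvalue c
  obtain ⟨w, hw0, hw⟩ : ∃ w : K → ℂ, w ≠ 0 ∧ S w = c • w := by
    set U : Module.End ℂ (K → ℂ) := S - c • 1 with hU
    by_cases hinj : Function.Injective U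
    · exfalso
      have hUsurj : Function.Surjective U := LinearMap.injective_iff_surjective.mp hinj
      have hzero : ∀ x, φ (U x) = 0 := by
        intro x
        rw [hU]
        simp only [LinearMap.sub_apply, LinearMap.smul_apply, Module.End.one_apply]
        rw [map_sub, map_smul, hφS, sub_self]
      obtain ⟨y, hy⟩ := hsurj v₀
      obtain ⟨x, hx⟩ := hUsurj y
      exact hv₀ (by rw [← hy, ← hx, hzero])
    · rw [← LinearMap.ker_eq_bot] at hinj
      obtain ⟨w, hwker, hw0⟩ := Submodule.exists_mem_ne_zero_of_ne_bot hinj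
      refine ⟨w, hw0, ?_⟩
      have := LinearMap.mem_ker.mp hwker
      rw [hU] at this
      simp only [LinearMap.sub_apply, LinearMap.smul_apply, Module.End.one_apply] at this
      rw [sub_eq_zero] at this
      exact this
  -- pass to the matrix of S
  set B : Matrix K K ℂ := LinearMap.toMatrix' S with hB
  have hBw : B.mulVec w = c • w := by
    have : Matrix.toLin' B = S := Matrix.toLin'_toMatrix' S
    rw [← hw, ← this, Matrix.toLin'_apply]
  have hdet : (c • (1 : Matrix K K ℂ) - B).det = 0 := by
    refine Matrix.exists_mulVec_eq_zero_iff.mp ⟨w, hw0, ?_⟩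
    rw [Matrix.sub_mulVec, Matrix.smul_mulVec, Matrix.one_mulVec, hBw, sub_self]
  have heval : (Matrix.charpoly B).eval c = 0 := by rw [my_eval_charpoly]; exact hdet
  -- entries of B are algebraic integers
  have hBentry : ∀ x y : K, B x y = χ (y * x⁻¹) := by
    intro x y
    rw [hB, LinearMap.toMatrix'_apply]
    have hSapp : S (Pi.single y 1) x
        = ∑ k : K, χ k⁻¹ * (if k⁻¹ * x = y then (1:ℂ) else 0) := by
      rw [hS, LinearMap.sum_apply, Finset.sum_apply]
      refine Finset.sum_congr rfl (fun k _ => ?_)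
      simp only [LinearMap.smul_apply, hL, LinearMap.funLeft_apply, Pi.smul_apply, smul_eq_mul,
        Pi.single_apply]
    rw [hSapp]
    have hcond : ∀ k : K, (k⁻¹ * x = y) = (k = x * y⁻¹) := by
      intro k
      apply propext
      constructor
      · intro hk; rw [← hk]; group
      · intro hk; rw [hk]; group
    have : ∀ k : K, χ k⁻¹ * (if k⁻¹ * x = y then (1:ℂ) else 0)
        = if k = x * y⁻¹ then χ k⁻¹ else 0 := by
      intro k
      rw [hcond]
      by_cases hk : k = x * y⁻¹ <;> simp [hk]
    rw [Finset.sum_congr rfl (fun k _ => this k), Finset.sum_ite_eq' Finset.univ (x * y⁻¹)]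
    simp only [Finset.mem_univ, if_true]
    congr 1
    group
  have halg : ∀ k : K, IsIntegral ℤ (χ k) := fun k => my_char_integral ρ k
  set O := integralClosure ℤ ℂ with hO
  set B₀ : Matrix K K O := fun x y => ⟨χ (y * x⁻¹), halg _⟩ with hB₀
  have hmap : B = B₀.map (algebraMap O ℂ) := by
    ext x y
    rw [hBentry]
    rfl
  have hcO : IsIntegral O c := by
    refine ⟨Matrix.charpoly B₀, Matrix.charpoly_monic _, ?_⟩
    rw [Polynomial.eval₂_eq_eval_map, ← Matrix.charpoly_map B₀ (algebraMap O ℂ), ← hmap]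
    exact heval
  haveI : Algebra.IsIntegral ℤ O := inferInstance
  have hcZ : IsIntegral ℤ c := isIntegral_trans c hcO
  -- conclude divisibility
  set q : ℚ := (N : ℚ) / (d : ℚ) with hq
  have hdC : (d : ℂ) ≠ 0 := Nat.cast_ne_zero.mpr hd0
  have hcq : algebraMap ℚ ℂ q = c := by
    rw [hq]
    rw [map_div₀, map_natCast, map_natCast]
    exact ((eq_div_iff hdC).mpr hcd).symm
  have hqint : IsIntegral ℤ q :=
    (isIntegral_algebraMap_iff (algebraMap ℚ ℂ).injective).mp (by rw [hcq]; exact hcZ)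
  obtain ⟨m, hm⟩ := IsIntegrallyClosed.isIntegral_iff.mp hqint
  have hdQ : (d : ℚ) ≠ 0 := Nat.cast_ne_zero.mpr hd0
  have hmq : (m : ℚ) * (d : ℚ) = (N : ℚ) := by
    have hm' : (m : ℚ) = q := by rw [← hm]; simp [eq_intCast]
    rw [hm']
    exact div_mul_cancel₀ _ hdQ
  have hmZ : m * (d : ℤ) = (N : ℤ) := by exact_mod_cast hmq
  have : (d : ℤ) ∣ (N : ℤ) := Dvd.intro_left m hmZ
  exact_mod_cast this
open CategoryTheory Module

section CatLemmas
variable {G : Type} [Group G]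

/-- From categorical simplicity: every invariant submodule is ⊥ or ⊤. -/
lemma my_simple_submodule (V : FDRep ℂ G) [Simple V] (p : Submodule ℂ V)
    (hp : ∀ g : G, ∀ x ∈ p, V.ρ g x ∈ p) : p = ⊥ ∨ p = ⊤ := by
  by_cases hbot : p = ⊥
  · exact Or.inl hbot
  right
  -- the subrepresentation on p
  let ρ' : Representation ℂ G p :=
    { toFun := fun g => (V.ρ g).restrict (hp g)
      map_one' := by
        ext x
        simp [LinearMap.restrict_apply]
      map_mul' := by
        intro g h
        ext x
        simp [LinearMap.restrict_apply] }
  let W : FDRep ℂ G := FDRep.of ρ'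
  let ι : W ⟶ V := ⟨FGModuleCat.ofHom p.subtype, by
    intro g
    ext x
    show p.subtype ((ρ' g) x) = V.ρ g (p.subtype x)
    simp [ρ', LinearMap.restrict_apply]⟩
  haveI : Mono ι := by
    constructor
    intro Z u w huw
    have h2 : p.subtype.comp u.hom.hom.hom = p.subtype.comp w.hom.hom.hom :=
      congrArg (fun f => f.hom.hom.hom) huw
    apply Action.Hom.ext
    ext x
    exact LinearMap.congr_fun h2 x
  have hι0 : ι ≠ 0 := by
    obtain ⟨x, hxp, hx0⟩ := Submodule.exists_mem_ne_zero_of_ne_bot hbot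
    intro h
    have : ι.hom.hom.hom ⟨x, hxp⟩ = 0 := by rw [h, Action.zero_hom]; rfl
    exact hx0 this
  haveI : IsIso ι := isIso_of_mono_of_nonzero hι0
  rw [Submodule.eq_top_iff']
  intro v
  have hid : p.subtype.comp ((inv ι).hom.hom.hom) = LinearMap.id :=
    congrArg (fun f => f.hom.hom.hom) (IsIso.inv_hom_id ι)
  have h4 : p.subtype ((inv ι).hom.hom.hom v) = v := LinearMap.congr_fun hid v
  rw [← h4]
  exact ((inv ι).hom.hom.hom v).2

/-- Schur: an equivariant endomorphism of a simple FDRep is scalar. -/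
lemma my_schur (V : FDRep ℂ G) [Simple V] (f : Module.End ℂ V)
    (hf : ∀ g : G, f * V.ρ g = V.ρ g * f) : ∃ c : ℂ, f = c • (1 : Module.End ℂ V) := by
  let F : V ⟶ V := ⟨FGModuleCat.ofHom f, fun g => by ext x; exact LinearMap.congr_fun (hf g) x⟩
  have hrank : finrank ℂ (V ⟶ V) = 1 := by
    rw [FDRep.finrank_hom_simple_simple V V, if_pos ⟨Iso.refl V⟩]
  have hid : (𝟙 V : V ⟶ V) ≠ 0 := id_nonzero V
  obtain ⟨c, hc⟩ := (finrank_eq_one_iff_of_nonzero' (𝟙 V : V ⟶ V) hid).mp hrank F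
  refine ⟨c, ?_⟩
  have h5 := congrArg (fun φ => φ.hom.hom.hom) hc
  exact h5.symm

end CatLemmas
open CategoryTheory Module


lemma my_orthonormal {G : Type} [Group G] [Finite G] (V : FDRep ℂ G) [Simple V] :
    ∑ᶠ g : G, V.character g⁻¹ * V.character g = (Nat.card G : ℂ) := by
  have key : ∑ᶠ g : (GrpCat.of G : Type), V.character g * V.character g⁻¹
      = (Nat.card (GrpCat.of G : Type) : ℂ) := by
    letI : Finite (GrpCat.of G : Type) := ‹Finite G›
    letI fG : Fintype (GrpCat.of G : Type) := Fintype.ofFinite _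
    have hcard : (Fintype.card (GrpCat.of G : Type) : ℂ) ≠ 0 :=
      Nat.cast_ne_zero.mpr Fintype.card_ne_zero
    haveI : Invertible (Fintype.card (GrpCat.of G : Type) : ℂ) := invertibleOfNonzero hcard
    have h := FDRep.char_orthonormal (G := GrpCat.of G) V V
    rw [if_pos ⟨Iso.refl V⟩] at h
    rw [Nat.card_eq_fintype_card, inv_mul_eq_one₀ hcard] at h
    rw [finsum_eq_sum_of_fintype, Nat.card_eq_fintype_card]
    exact h.symm
  have key2 : ∑ᶠ g : G, V.character g * V.character g⁻¹ = (Nat.card G : ℂ) := key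
  letI : Fintype G := Fintype.ofFinite G
  rw [finsum_eq_sum_of_fintype] at key2 ⊢
  rw [← key2]
  refine Fintype.sum_bijective (fun g : G => g⁻¹) (Equiv.inv G).bijective _ _ ?_
  intro g
  simp [mul_comm]

lemma my_H_le_M {G : Type} [Group G] [Finite G] (π : Set ℕ)
    (H : Subgroup G) (hn : H.Normal) (M : Subgroup G)
    (hcard : IsPiNumber πᶜ (Nat.card H)) (hMidx : IsPiNumber π M.index) : H ≤ M := by
  set s := H ⊔ M with hs
  have hMs : M ≤ s := le_sup_right
  have hHs : H ≤ s := le_sup_left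
  set r := M.relIndex s with hr
  have e1 : r * s.index = M.index := Subgroup.relIndex_mul_index hMs
  have hrdvd : r ∣ M.index := Dvd.intro _ e1
  set a := H.relIndex M with ha
  have c1 : Nat.card M * r = Nat.card s := by
    have := Subgroup.card_mul_index (M.subgroupOf s)
    rwa [Nat.card_congr (Subgroup.subgroupOfEquivOfLe hMs).toEquiv] at this
  have c2 : Nat.card H * a = Nat.card s := by
    have := Subgroup.card_mul_index (H.subgroupOf s)
    rw [Nat.card_congr (Subgroup.subgroupOfEquivOfLe hHs).toEquiv] at this
    have e2 : (H.subgroupOf s).index = a := by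
      show H.relIndex s = a
      rw [hs, ha]
      haveI := hn
      exact Subgroup.relIndex_sup_left M H
    rwa [e2] at this
  have c3 : Nat.card (H.subgroupOf M) * a = Nat.card M := Subgroup.card_mul_index (H.subgroupOf M)
  have ha0 : a ≠ 0 := by
    intro h0
    rw [h0, Nat.mul_zero] at c3
    exact (Nat.card_pos (α := M)).ne' c3.symm
  have hrH : r ∣ Nat.card H := by
    refine ⟨Nat.card (H.subgroupOf M), ?_⟩
    have : (Nat.card H * a) = (Nat.card (H.subgroupOf M) * a) * r := by
      rw [c3, c1, c2]
    have h5 : Nat.card H * a = (r * Nat.card (H.subgroupOf M)) * a := by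
      rw [this]; ring
    have := Nat.eq_of_mul_eq_mul_right (Nat.pos_of_ne_zero ha0) h5
    rw [this, mul_comm]
  have hr1 : r = 1 := by
    by_contra h1
    obtain ⟨p, hp, hpd⟩ := Nat.exists_prime_and_dvd h1
    exact (hcard p hp (hpd.trans hrH)) (hMidx p hp (hpd.trans hrdvd))
  have : M.subgroupOf s = ⊤ := Subgroup.index_eq_one.mp hr1
  have hsM : s ≤ M := Subgroup.subgroupOf_eq_top.mp this
  exact hHs.trans hsM

/-- If `G` has a normal `π`-complement `H`, then for every maximal subgroup `M` of `π`-number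
index and every irreducible constituent `χ` of `(1_M)^G`, `H ≤ ker χ` and `χ(1)` is a
`π`-number. -/
theorem stmt6 {G : Type} [Group G] [Finite G] (π : Set ℕ)
    (H : Subgroup G) (hn : H.Normal)
    (hcard : IsPiNumber πᶜ (Nat.card H)) (hidx : IsPiNumber π H.index)
    (M : Subgroup G) (hM : IsCoatom M) (hMidx : IsPiNumber π M.index)
    (χ : G → ℂ) (hχ : IsConstituent G χ (permChar M)) :
    (H : Set G) ⊆ charKer G χ ∧ ∃ d : ℕ, χ 1 = (d : ℂ) ∧ IsPiNumber π d := by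
  classical
  obtain ⟨⟨V, hS, hchar⟩, hinner⟩ := hχ
  haveI := hS
  subst hchar
  letI : Fintype G := Fintype.ofFinite G
  -- Step 1 : H ≤ M
  have hHM : H ≤ M := my_H_le_M π H hn M hcard hMidx
  -- Step 2 : the sum of character values over M is nonzero
  have hperm : ∀ g : G, permChar M g
      = (Nat.card M : ℂ)⁻¹ * ∑ x : G, (if x * g * x⁻¹ ∈ M then (1:ℂ) else 0) := by
    intro g
    rw [permChar, indChar, finsum_eq_sum_of_fintype]
    simp only [dite_eq_ite]
  have hconj : ∀ g : G, (starRingEnd ℂ) (permChar M g) = permChar M g := by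
    intro g
    rw [hperm g, map_mul, map_inv₀, map_natCast, map_sum]
    congr 1
    refine Finset.sum_congr rfl (fun x _ => ?_)
    by_cases hx : x * g * x⁻¹ ∈ M <;> simp [hx]
  set Sig0 : ℂ := ∑ g : G, (if g ∈ M then V.character g else 0) with hSig0
  have hSig : Sig0 ≠ 0 := by
    intro h0
    apply hinner
    rw [charInner, finsum_eq_sum_of_fintype]
    have key : ∑ g : G, V.character g * (starRingEnd ℂ) (permChar M g)
        = (Nat.card M : ℂ)⁻¹ * ((Fintype.card G : ℂ) * Sig0) := by
      calc ∑ g : G, V.character g * (starRingEnd ℂ) (permChar M g)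
          = ∑ g : G, (Nat.card M : ℂ)⁻¹
              * ∑ x : G, (if x * g * x⁻¹ ∈ M then V.character g else 0) := by
            refine Finset.sum_congr rfl (fun g _ => ?_)
            rw [hconj g, hperm g, mul_left_comm]
            congr 1
            rw [Finset.mul_sum]
            refine Finset.sum_congr rfl (fun x _ => ?_)
            by_cases hx : x * g * x⁻¹ ∈ M <;> simp [hx]
        _ = (Nat.card M : ℂ)⁻¹
              * ∑ g : G, ∑ x : G, (if x * g * x⁻¹ ∈ M then V.character g else 0) := by
            rw [Finset.mul_sum]
        _ = (Nat.card M : ℂ)⁻¹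
              * ∑ x : G, ∑ g : G, (if x * g * x⁻¹ ∈ M then V.character g else 0) := by
            rw [Finset.sum_comm]
        _ = (Nat.card M : ℂ)⁻¹ * ∑ _x : G, Sig0 := by
            congr 1
            refine Finset.sum_congr rfl (fun x _ => ?_)
            refine Fintype.sum_bijective (fun g => x * g * x⁻¹)
              (((Equiv.mulLeft x).trans (Equiv.mulRight x⁻¹)).bijective) _ _ ?_
            intro g
            by_cases hg : x * g * x⁻¹ ∈ M
            · rw [if_pos hg, if_pos hg, FDRep.char_conj]
            · rw [if_neg hg, if_neg hg]
        _ = (Nat.card M : ℂ)⁻¹ * ((Fintype.card G : ℂ) * Sig0) := by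
            rw [Finset.sum_const, nsmul_eq_mul, Finset.card_univ]
    rw [key, h0]
    ring
  -- Step 3 : a nonzero M-fixed vector
  have hSig' : ∑ m : ↥M, V.character (m : G) = Sig0 := by
    rw [hSig0, ← Finset.sum_filter]
    exact (Finset.sum_subtype _ (by simp) _).symm
  set P : Module.End ℂ V := ∑ m : ↥M, V.ρ (m : G) with hP
  have htrP : LinearMap.trace ℂ V P = Sig0 := by
    rw [hP, map_sum, ← hSig']
    rfl
  have hPne : P ≠ 0 := by
    intro h0
    rw [h0, map_zero] at htrP
    exact hSig htrP.symm
  obtain ⟨w, hw⟩ : ∃ w : V, P w ≠ 0 := by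
    by_contra hwa
    push_neg at hwa
    exact hPne (LinearMap.ext (fun x => hwa x))
  set v : V := P w with hv
  have hv0 : v ≠ 0 := hw
  have hfix : ∀ m ∈ M, V.ρ m v = v := by
    intro m hm
    have hmP : V.ρ m * P = P := by
      rw [hP, Finset.mul_sum]
      refine Fintype.sum_bijective (fun x : ↥M => (⟨m, hm⟩ : ↥M) * x)
        (Equiv.mulLeft (⟨m, hm⟩ : ↥M)).bijective _ _ ?_
      intro x
      show V.ρ m * V.ρ (x : G) = V.ρ (((⟨m, hm⟩ : ↥M) * x : ↥M) : G)
      rw [show (((⟨m, hm⟩ : ↥M) * x : ↥M) : G) = m * (x : G) from rfl, map_mul]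
    calc V.ρ m v = (V.ρ m * P) w := rfl
      _ = P w := by rw [hmP]
      _ = v := rfl
  -- Step 4 : H acts trivially
  have htriv : ∀ h ∈ H, V.ρ h = 1 := by
    intro h hh
    set W : Submodule ℂ V := Submodule.span ℂ (Set.range (fun g : G => V.ρ g v)) with hW
    have hWinv : ∀ g : G, ∀ x ∈ W, V.ρ g x ∈ W := by
      intro g x hx
      have hmap : Submodule.map (V.ρ g) W ≤ W := by
        rw [hW, Submodule.map_span]
        refine Submodule.span_le.mpr ?_
        rintro _ ⟨_, ⟨g', rfl⟩, rfl⟩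
        refine Submodule.subset_span ⟨g * g', ?_⟩
        show V.ρ (g * g') v = V.ρ g (V.ρ g' v)
        rw [map_mul]
        rfl
      exact hmap (Submodule.mem_map_of_mem hx)
    have hvW : v ∈ W := Submodule.subset_span ⟨1, by show V.ρ 1 v = v; rw [map_one]; rfl⟩
    have hWtop : W = ⊤ := by
      rcases my_simple_submodule V W hWinv with hb | ht
      · exact absurd (hb ▸ hvW) (by simpa using hv0)
      · exact ht
    have hQ : ∀ x : V, x ∈ W → V.ρ h x = x := by
      intro x hx
      have hle : W ≤ LinearMap.eqLocus (V.ρ h) (1 : Module.End ℂ V) := by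
        rw [hW]
        refine Submodule.span_le.mpr ?_
        rintro _ ⟨g, rfl⟩
        show V.ρ h (V.ρ g v) = V.ρ g v
        have hin : g⁻¹ * h * g ∈ M := by
          have := hn.conj_mem h hh g⁻¹
          rw [inv_inv] at this
          exact hHM this
        calc V.ρ h (V.ρ g v) = V.ρ (h * g) v := by rw [map_mul]; rfl
          _ = V.ρ (g * (g⁻¹ * h * g)) v := by
              congr 2
              group
          _ = V.ρ g (V.ρ (g⁻¹ * h * g) v) := by rw [map_mul]; rfl
          _ = V.ρ g v := by rw [hfix _ hin]
      exact hle hx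
    exact LinearMap.ext (fun x => hQ x (hWtop ▸ Submodule.mem_top))
  -- Part (i)
  have part1 : (H : Set G) ⊆ charKer G (V.character) := by
    intro x hx
    show V.character x = V.character 1
    show LinearMap.trace ℂ V (V.ρ x) = LinearMap.trace ℂ V (V.ρ 1)
    rw [htriv x hx, show V.ρ (1 : G) = 1 from map_one _]
  -- Part (ii)
  set K := G ⧸ H with hK
  have hker : H ≤ (V.ρ : G →* Module.End ℂ V).ker := by
    intro h hh
    exact htriv h hh
  set ρQ : Representation ℂ K V := QuotientGroup.lift H (V.ρ : G →* Module.End ℂ V) hker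
    with hρQ
  have hmk : ∀ g : G, ρQ (QuotientGroup.mk g) = V.ρ g := fun g => rfl
  have hdvd : Module.finrank ℂ V ∣ Nat.card K := by
    refine my_dvd_lemma ρQ v hv0 ?_ ?_ ?_
    · intro f hf
      refine my_schur V f (fun g => ?_)
      have := hf (QuotientGroup.mk g)
      rwa [hmk] at this
    · intro p hp
      refine my_simple_submodule V p (fun g x hx => ?_)
      have := hp (QuotientGroup.mk g) x hx
      rwa [hmk] at this
    · letI : Fintype K := Fintype.ofFinite K
      set F : K → ℂ := fun q => LinearMap.trace ℂ V (ρQ q⁻¹) * LinearMap.trace ℂ V (ρQ q)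
        with hF
      have hFmk : ∀ g : G, F (QuotientGroup.mk g) = V.character g⁻¹ * V.character g := by
        intro g
        rw [hF]
        show LinearMap.trace ℂ V (ρQ ((QuotientGroup.mk g)⁻¹)) * _ = _
        rw [show ((QuotientGroup.mk g : K)⁻¹) = QuotientGroup.mk g⁻¹ from rfl, hmk, hmk]
        rfl
      have hbase : ∑ g : G, F (QuotientGroup.mk g) = (Nat.card G : ℂ) := by
        rw [Finset.sum_congr rfl (fun g _ => hFmk g)]
        have := my_orthonormal V
        rwa [finsum_eq_sum_of_fintype] at this
      have h6 : ∀ q : K, (∑ g ∈ Finset.univ.filter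
            (fun g : G => (QuotientGroup.mk g : K) = q), F (QuotientGroup.mk g))
          = (Nat.card H : ℂ) * F q := by
        intro q
        obtain ⟨a, rfl⟩ := QuotientGroup.mk_surjective q
        have hval : ∀ g ∈ Finset.univ.filter
            (fun g : G => (QuotientGroup.mk g : K) = QuotientGroup.mk a),
            F (QuotientGroup.mk g) = F (QuotientGroup.mk a) := by
          intro g hg
          rw [(Finset.mem_filter.mp hg).2]
        rw [Finset.sum_congr rfl hval, Finset.sum_const]
        have hcardfil : (Finset.univ.filter
            (fun g : G => (QuotientGroup.mk g : K) = QuotientGroup.mk a)).card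
            = Nat.card H := by
          rw [← Fintype.card_subtype]
          have e : {g : G // (QuotientGroup.mk g : K) = QuotientGroup.mk a} ≃ ↥H :=
            { toFun := fun z => ⟨a⁻¹ * z.1, by
                have := z.2
                rw [eq_comm, QuotientGroup.eq] at this
                exact this⟩
              invFun := fun h => ⟨a * h.1, by
                rw [eq_comm, QuotientGroup.eq]
                simpa using h.2⟩
              left_inv := fun z => by
                ext
                simp
              right_inv := fun h => by
                ext
                simp }
          rw [Fintype.card_congr e, Nat.card_eq_fintype_card]
        rw [hcardfil, nsmul_eq_mul]
      have hfiber : ∑ g : G, F (QuotientGroup.mk g)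
          = (Nat.card H : ℂ) * ∑ q : K, F q := by
        rw [← Finset.sum_fiberwise Finset.univ (fun g : G => (QuotientGroup.mk g : K))
          (fun g => F (QuotientGroup.mk g))]
        rw [Finset.sum_congr rfl (fun q _ => h6 q), Finset.mul_sum]
      have hHne : (Nat.card H : ℂ) ≠ 0 :=
        Nat.cast_ne_zero.mpr (Nat.card_pos (α := H)).ne'
      have hcards : (Nat.card G : ℂ) = (Nat.card H : ℂ) * (Nat.card K : ℂ) := by
        rw [← Nat.cast_mul]
        congr 1
        rw [Subgroup.card_eq_card_quotient_mul_card_subgroup H]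
        ring
      rw [finsum_eq_sum_of_fintype]
      have : (Nat.card H : ℂ) * ∑ q : K, F q = (Nat.card H : ℂ) * (Nat.card K : ℂ) := by
        rw [← hfiber, hbase, hcards]
      exact mul_left_cancel₀ hHne this
  have hKidx : Nat.card K = H.index := rfl
  refine ⟨part1, Module.finrank ℂ V, ?_, ?_⟩
  · exact FDRep.char_one V
  · intro p pp pd
    exact hidx p pp (pd.trans (hKidx ▸ hdvd))
end

section
/- Let G be a finite nonabelian simple group, K a proper subgroup of maximal order, and χ a nonprincipal irreducible constituent of (1_K)^G. If χ = λ^G for a linear character λ of a subgroup K₁ ≤ G, then |K₁| > |K|; consequently K₁ = G and χ is linear, contradicting G = G'. Hence no nonprincipal irreducible constituent of (1_K)^G is monomial. -/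
open scoped BigOperators Classical

section Stmt11Aux

open CategoryTheory Module Representation

variable {G : Type} [Group G]

lemma stmt11_inner_eq_finrank_hom [Fintype G] (V W : FDRep ℂ G) :
    (Fintype.card G : ℂ)⁻¹ * ∑ g : G, FDRep.character V g * FDRep.character W g⁻¹
      = finrank ℂ (W ⟶ V) := by
  letI : Invertible (Fintype.card G : ℂ) :=
    invertibleOfNonzero (by exact_mod_cast Fintype.card_ne_zero)
  have h := FDRep.average_char_eq_finrank_invariants (FDRep.of (linHom W.ρ V.ρ))
  rw [Nat.card_eq_fintype_card] at h
  have hc : ∀ g : G, (FDRep.of (linHom W.ρ V.ρ)).character g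
      = V.character g * W.character g⁻¹ := by
    intro g
    rw [FDRep.char_linHom, mul_comm]
  simp_rw [hc] at h
  rw [h]
  rw [show (FDRep.of (linHom W.ρ V.ρ)).ρ = linHom W.ρ V.ρ from FDRep.of_ρ' (linHom W.ρ V.ρ)]
  erw [(Representation.linHom.invariantsEquivFDRepHom (G := G) W V).finrank_eq]

/-- Subrepresentation on an invariant submodule. -/
noncomputable def stmt11_subRep (X : FDRep ℂ G) (p : Submodule ℂ X)
    (hp : ∀ (g : G), ∀ v ∈ p, X.ρ g v ∈ p) : Representation ℂ G p where
  toFun g := (X.ρ g).restrict (fun v hv => hp g v hv)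
  map_one' := by ext v; simp [LinearMap.restrict_apply]
  map_mul' g h := by ext v; simp [LinearMap.restrict_apply]

lemma stmt11_simple_invariant_submodule (X : FDRep ℂ G)
    (hs : CategoryTheory.Simple X) (p : Submodule ℂ X)
    (hp : ∀ (g : G), ∀ v ∈ p, X.ρ g v ∈ p) (hne : p ≠ ⊥) : p = ⊤ := by
  haveI := hs
  let Y : FDRep ℂ G := FDRep.of (stmt11_subRep X p hp)
  let ι : Y ⟶ X := ⟨FGModuleCat.ofHom (p.subtype : _ →ₗ[ℂ] _), fun g => by ext v; rfl⟩
  haveI : Mono ι := by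
    constructor
    intro Z f h hfh
    ext z
    have := congrArg (fun m => m.hom z) hfh
    exact this
  have hι : ι ≠ 0 := by
    obtain ⟨v, hv, hv0⟩ := Submodule.exists_mem_ne_zero_of_ne_bot hne
    intro h0
    have : ι.hom ⟨v, hv⟩ = (0 : Y ⟶ X).hom ⟨v, hv⟩ := by rw [h0]
    simp only [Action.zero_hom] at this
    exact hv0 this
  haveI : IsIso ι := (Simple.mono_isIso_iff_nonzero ι).mpr hι
  rw [Submodule.eq_top_iff']
  intro x
  have hx : ι.hom ((CategoryTheory.inv ι).hom x) = x :=
    congrArg (fun m => m.hom x) (IsIso.inv_hom_id ι)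
  rw [← hx]
  exact (show (p.subtype ((CategoryTheory.inv ι).hom x) : X) ∈ p from ((CategoryTheory.inv ι).hom x).2)

variable [Finite G] (K : Subgroup G)

noncomputable def stmt11_fiberEquiv (q : G ⧸ K) : {x : G // (x : G ⧸ K) = q} ≃ K where
  toFun x := ⟨(Quotient.out q)⁻¹ * x.1, by
    have hx : ((Quotient.out q : G) : G ⧸ K) = (x.1 : G ⧸ K) := by
      rw [x.2, QuotientGroup.out_eq']
    exact QuotientGroup.eq.mp hx⟩
  invFun k := ⟨Quotient.out q * k.1, by
    rw [QuotientGroup.mk_mul_of_mem _ k.2, QuotientGroup.out_eq']⟩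
  left_inv x := by ext; simp
  right_inv k := by ext; simp

omit [Finite G] in
lemma stmt11_card_fiber (q : G ⧸ K) :
    Nat.card {x : G // (x : G ⧸ K) = q} = Nat.card K :=
  Nat.card_congr (stmt11_fiberEquiv K q)

lemma stmt11_permChar_eq (g : G) :
    permChar K g = (Nat.card {q : G ⧸ K // g • q = q} : ℂ) := by
  haveI : Fintype G := Fintype.ofFinite G
  haveI : Fintype (G ⧸ K) := Fintype.ofFinite _
  have hiff : ∀ x : G, x * g * x⁻¹ ∈ K ↔ g • ((x⁻¹ : G) : G ⧸ K) = ((x⁻¹ : G) : G ⧸ K) := by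
    intro x
    rw [MulAction.Quotient.smul_mk, smul_eq_mul, QuotientGroup.eq]
    constructor
    · intro h
      have : (x * g * x⁻¹)⁻¹ ∈ K := inv_mem h
      simpa [mul_assoc, mul_inv_rev] using this
    · intro h
      have : ((g * x⁻¹)⁻¹ * x⁻¹)⁻¹ ∈ K := inv_mem h
      simpa [mul_assoc, mul_inv_rev] using this
  unfold permChar indChar
  rw [finsum_eq_sum_of_fintype]
  have h1 : ∀ x : G, (if h : x * g * x⁻¹ ∈ K then (1:ℂ) else 0)
      = if g • ((x⁻¹ : G) : G ⧸ K) = ((x⁻¹ : G) : G ⧸ K) then 1 else 0 := by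
    intro x; rw [dite_eq_ite]; exact if_congr (hiff x) rfl rfl
  simp_rw [h1]
  have h2 : ∑ x : G, (if g • ((x⁻¹ : G) : G ⧸ K) = ((x⁻¹ : G) : G ⧸ K) then (1:ℂ) else 0)
      = ∑ x : G, (if g • ((x : G) : G ⧸ K) = ((x : G) : G ⧸ K) then (1:ℂ) else 0) :=
    Fintype.sum_equiv (Equiv.inv G) _ _ (fun x => rfl)
  rw [h2]
  have h3 : ∑ x : G, (if g • ((x : G) : G ⧸ K) = ((x : G) : G ⧸ K) then (1:ℂ) else 0)
      = ∑ q : G ⧸ K, ∑ x : {x : G // (x : G ⧸ K) = q},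
          (if g • ((x.1 : G) : G ⧸ K) = ((x.1 : G) : G ⧸ K) then (1:ℂ) else 0) :=
    (Fintype.sum_fiberwise _ _).symm
  rw [h3]
  have h4 : ∀ q : G ⧸ K, ∑ x : {x : G // (x : G ⧸ K) = q},
      (if g • ((x.1 : G) : G ⧸ K) = ((x.1 : G) : G ⧸ K) then (1:ℂ) else 0)
      = (Nat.card K : ℂ) * (if g • q = q then 1 else 0) := by
    intro q
    have he : ∀ x : {x : G // (x : G ⧸ K) = q},
        (if g • ((x.1 : G) : G ⧸ K) = ((x.1 : G) : G ⧸ K) then (1:ℂ) else 0)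
        = (if g • q = q then 1 else 0) := by
      intro x; rw [x.2]
    rw [Finset.sum_congr rfl (fun x _ => he x), Finset.sum_const, Finset.card_univ,
      ← Nat.card_eq_fintype_card, stmt11_card_fiber, nsmul_eq_mul]
  have hKne : (Nat.card K : ℂ) ≠ 0 := by
    exact_mod_cast (Nat.card_pos (α := K)).ne'
  rw [Finset.sum_congr rfl (fun q _ => h4 q), ← Finset.mul_sum, ← mul_assoc,
    inv_mul_cancel₀ hKne, one_mul, Finset.sum_boole]
  rw [Nat.card_eq_fintype_card, Fintype.card_subtype]

omit [Finite G] in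
/-- Permutation representation on `(G ⧸ K) →₀ ℂ`. -/
noncomputable def stmt11_ofMulAction : Representation ℂ G ((G ⧸ K) →₀ ℂ) where
  toFun g := Finsupp.lmapDomain ℂ ℂ (g • ·)
  map_one' := by ext; simp
  map_mul' x y := by ext; simp [mul_smul]

omit [Finite G] in
lemma stmt11_ofMulAction_single (g : G) (q : G ⧸ K) (r : ℂ) :
    stmt11_ofMulAction K g (Finsupp.single q r) = Finsupp.single (g • q) r := by
  simp [stmt11_ofMulAction]

omit [Finite G] in
lemma stmt11_ofMulAction_apply (g : G) (f : (G ⧸ K) →₀ ℂ) (q : G ⧸ K) :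
    stmt11_ofMulAction K g f q = f (g⁻¹ • q) := by
  have := Finsupp.mapDomain_apply (MulAction.injective g) f (g⁻¹ • q)
  rw [smul_inv_smul] at this
  exact this

noncomputable def stmt11_permRep : FDRep ℂ G :=
  haveI : Fintype (G ⧸ K) := Fintype.ofFinite _
  FDRep.of (stmt11_ofMulAction K)

lemma stmt11_permRep_char (g : G) :
    (stmt11_permRep K).character g = (Nat.card {q : G ⧸ K // g • q = q} : ℂ) := by
  haveI : Fintype (G ⧸ K) := Fintype.ofFinite _
  have h0 : (stmt11_permRep K).character g
      = LinearMap.trace ℂ _ (stmt11_ofMulAction K g) := rfl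
  rw [h0, LinearMap.trace_eq_matrix_trace ℂ (Finsupp.basisSingleOne (ι := G ⧸ K) (R := ℂ))]
  rw [Matrix.trace]
  have hdiag : ∀ q : G ⧸ K,
      Matrix.diag ((LinearMap.toMatrix Finsupp.basisSingleOne Finsupp.basisSingleOne)
        (stmt11_ofMulAction K g)) q = if g • q = q then 1 else 0 := by
    intro q
    rw [Matrix.diag, LinearMap.toMatrix_apply, Finsupp.basisSingleOne_repr]
    show (stmt11_ofMulAction K g (Finsupp.single q 1)) q = _
    rw [stmt11_ofMulAction_single, Finsupp.single_apply]
  rw [Finset.sum_congr rfl (fun q _ => hdiag q), Finset.sum_boole,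
    Nat.card_eq_fintype_card, Fintype.card_subtype]

lemma stmt11_indChar_one (H : Subgroup G) (φ : H → ℂ) (hφ1 : φ 1 = 1) :
    indChar H φ 1 = (H.index : ℂ) := by
  haveI : Fintype G := Fintype.ofFinite G
  unfold indChar
  rw [finsum_eq_sum_of_fintype]
  have hterm : ∀ x : G, (if h : x * 1 * x⁻¹ ∈ H then φ ⟨x * 1 * x⁻¹, h⟩ else 0) = 1 := by
    intro x
    have e : x * 1 * x⁻¹ = 1 := by group
    rw [dif_pos (show x * 1 * x⁻¹ ∈ H by rw [e]; exact H.one_mem)]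
    have h1 : (⟨x * 1 * x⁻¹, by rw [e]; exact H.one_mem⟩ : H) = 1 := Subtype.ext e
    rw [h1, hφ1]
  rw [Finset.sum_congr rfl (fun x _ => hterm x), Finset.sum_const, Finset.card_univ,
    nsmul_eq_mul, mul_one]
  have hHne : (Nat.card H : ℂ) ≠ 0 := by exact_mod_cast (Nat.card_pos (α := H)).ne'
  have hmi : ((Nat.card H : ℂ)) * (H.index : ℂ) = (Fintype.card G : ℂ) := by
    rw [← Nat.cast_mul, Subgroup.card_mul_index, Nat.card_eq_fintype_card]
  rw [← hmi, ← mul_assoc, inv_mul_cancel₀ hHne, one_mul]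

lemma stmt11_key (hK : K ≠ ⊤) (V : FDRep ℂ G) (hs : CategoryTheory.Simple V)
    (hcon : charInner G (FDRep.character V) (permChar K) ≠ 0) :
    finrank ℂ V + 1 ≤ K.index := by
  haveI : Fintype G := Fintype.ofFinite G
  haveI : Fintype (G ⧸ K) := Fintype.ofFinite _
  have hNc : ∀ g : G, (starRingEnd ℂ) (permChar K g) = (stmt11_permRep K).character g⁻¹ := by
    intro g
    rw [stmt11_permChar_eq, stmt11_permRep_char, map_natCast]
    congr 1
    apply Nat.card_congr
    refine Equiv.subtypeEquivRight (fun q => ⟨fun h => ?_, fun h => ?_⟩)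
    · nth_rewrite 1 [← h]; rw [inv_smul_smul]
    · nth_rewrite 1 [← h]; rw [smul_inv_smul]
  have hinner : charInner G (FDRep.character V) (permChar K)
      = (finrank ℂ (stmt11_permRep K ⟶ V) : ℂ) := by
    unfold charInner
    rw [Nat.card_eq_fintype_card, finsum_eq_sum_of_fintype]
    simp_rw [hNc]
    exact stmt11_inner_eq_finrank_hom V (stmt11_permRep K)
  rw [hinner] at hcon
  have hfr : finrank ℂ (stmt11_permRep K ⟶ V) ≠ 0 := by exact_mod_cast hcon
  haveI : Nontrivial (stmt11_permRep K ⟶ V) :=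
    Module.finrank_pos_iff.mp (Nat.pos_of_ne_zero hfr)
  obtain ⟨f, hf⟩ := exists_ne (0 : stmt11_permRep K ⟶ V)
  let F : ((G ⧸ K) →₀ ℂ) →ₗ[ℂ] V := f.hom.hom.hom
  have hF0 : F ≠ 0 := by
    intro h
    apply hf
    ext v
    have h1 : F v = 0 := by rw [h]; rfl
    exact h1
  have hcomm : ∀ (g : G) (w : (G ⧸ K) →₀ ℂ),
      F ((stmt11_permRep K).ρ g w) = V.ρ g (F w) := by
    intro g w
    exact congrArg (fun m => m w) (f.comm g)
  have hrange_inv : ∀ (g : G), ∀ v ∈ LinearMap.range F, V.ρ g v ∈ LinearMap.range F := by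
    intro g v hv
    obtain ⟨w, rfl⟩ := hv
    exact ⟨(stmt11_permRep K).ρ g w, hcomm g w⟩
  have hrange_ne : LinearMap.range F ≠ ⊥ := by
    intro hb
    apply hF0
    apply LinearMap.ext
    intro w
    have hm : F w ∈ LinearMap.range F := LinearMap.mem_range_self F w
    rw [hb] at hm
    simpa using hm
  have htop : LinearMap.range F = ⊤ :=
    stmt11_simple_invariant_submodule V hs _ hrange_inv hrange_ne
  have hrk := LinearMap.finrank_range_add_finrank_ker F
  rw [htop, finrank_top] at hrk
  have hW : finrank ℂ ((G ⧸ K) →₀ ℂ) = K.index := by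
    rw [Module.finrank_finsupp_self, Subgroup.index_eq_card, Nat.card_eq_fintype_card]
  have hidx2 : 2 ≤ K.index := by
    have h0 : K.index ≠ 0 := Subgroup.index_ne_zero_of_finite
    have h1 : K.index ≠ 1 := fun h => hK (Subgroup.index_eq_one.mp h)
    omega
  by_cases hk0 : LinearMap.ker F = ⊥
  · exfalso
    set c : (G ⧸ K) →₀ ℂ := ∑ q : G ⧸ K, Finsupp.single q 1 with hc
    have hcapp : ∀ q : G ⧸ K, c q = 1 := by
      intro q
      rw [hc, Finsupp.finset_sum_apply]
      simp [Finsupp.single_apply]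
    have hc0 : c ≠ 0 := by
      intro h
      have h2 := hcapp ((1 : G) : G ⧸ K)
      rw [h] at h2
      simp at h2
    have hcinv : ∀ g : G, (stmt11_permRep K).ρ g c = c := by
      intro g
      show stmt11_ofMulAction K g c = c
      ext q
      rw [stmt11_ofMulAction_apply, hcapp, hcapp]
    have hspan_inv : ∀ (g : G), ∀ v ∈ Submodule.span ℂ {c}, (stmt11_permRep K).ρ g v ∈
        Submodule.span ℂ {c} := by
      intro g v hv
      obtain ⟨a, rfl⟩ := Submodule.mem_span_singleton.mp hv
      show stmt11_ofMulAction K g (a • c) ∈ Submodule.span ℂ {c}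
      have hg : stmt11_ofMulAction K g c = c := hcinv g
      rw [map_smul, hg]
      exact Submodule.smul_mem _ a (Submodule.mem_span_singleton_self c)
    have himg_inv : ∀ (g : G), ∀ v ∈ Submodule.map F (Submodule.span ℂ {c}),
        V.ρ g v ∈ Submodule.map F (Submodule.span ℂ {c}) := by
      intro g v hv
      obtain ⟨w, hw, rfl⟩ := hv
      exact ⟨(stmt11_permRep K).ρ g w, hspan_inv g w hw, hcomm g w⟩
    have himg_ne : Submodule.map F (Submodule.span ℂ {c}) ≠ ⊥ := by
      rw [Submodule.ne_bot_iff]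
      refine ⟨F c, ⟨c, Submodule.mem_span_singleton_self c, rfl⟩, ?_⟩
      intro h
      exact hc0 (LinearMap.ker_eq_bot.mp hk0 (by rw [h, map_zero]))
    have himg_top := stmt11_simple_invariant_submodule V hs _ himg_inv himg_ne
    have hV1 : finrank ℂ V ≤ 1 := by
      calc finrank ℂ V
          = finrank ℂ (Submodule.map F (Submodule.span ℂ {c}) : Submodule ℂ V) := by
            rw [himg_top, finrank_top]
        _ ≤ finrank ℂ (Submodule.span ℂ {c} : Submodule ℂ _) := Submodule.finrank_map_le _ _
        _ = 1 := finrank_span_singleton hc0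
    have hker0 : finrank ℂ (LinearMap.ker F) = 0 :=
      Submodule.finrank_eq_zero.mpr hk0
    omega
  · have hker : finrank ℂ (LinearMap.ker F) ≠ 0 :=
      fun h => hk0 (Submodule.finrank_eq_zero.mp h)
    omega

end Stmt11Aux
/-- Let `G` be a finite nonabelian simple group, `K` a proper subgroup of maximal order, and
`χ` a nonprincipal irreducible constituent of `(1_K)^G`. If `χ = λ^G` for a linear character
`λ` of `K₁ ≤ G`, then `|K₁| > |K|`, `K₁ = G` and `χ` is linear; hence no nonprincipal
irreducible constituent of `(1_K)^G` is monomial. -/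
theorem stmt11 {G : Type} [Group G] [Finite G] [IsSimpleGroup G]
    (hna : ¬ ∀ a b : G, a * b = b * a)
    (K : Subgroup G) (hK : K ≠ ⊤)
    (hmax : ∀ K' : Subgroup G, K' ≠ ⊤ → Nat.card K' ≤ Nat.card K)
    (χ : G → ℂ) (hχ : IsConstituent G χ (permChar K)) (hnp : χ ≠ fun _ => 1) :
    (∀ (K₁ : Subgroup G) (lam : K₁ → ℂ), IsLinearChar K₁ lam → χ = indChar K₁ lam →
      Nat.card K < Nat.card K₁ ∧ K₁ = ⊤ ∧ χ 1 = 1) ∧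
    ¬ IsMonomial G χ := by
  obtain ⟨⟨V, hsV, hchar⟩, hcon⟩ := hχ
  have main : ∀ (K₁ : Subgroup G) (lam : K₁ → ℂ), IsLinearChar K₁ lam → χ = indChar K₁ lam →
      Nat.card K < Nat.card K₁ ∧ K₁ = ⊤ ∧ χ 1 = 1 := by
    intro K₁ lam hlin heq
    have h1 : χ 1 = (K₁.index : ℂ) := by
      rw [heq]; exact stmt11_indChar_one K₁ lam hlin.1
    have h2 : χ 1 = (Module.finrank ℂ V : ℂ) := by
      rw [← hchar, FDRep.char_one]
    have hidx : K₁.index = Module.finrank ℂ V := by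
      exact_mod_cast h1.symm.trans h2
    have hkey := stmt11_key K hK V hsV (by rw [hchar]; exact hcon)
    have hlt : K₁.index < K.index := by omega
    have e1 := Subgroup.card_mul_index K
    have e2 := Subgroup.card_mul_index K₁
    have hKpos : 0 < Nat.card K := Nat.card_pos
    have hK1pos : 0 < Nat.card K₁ := Nat.card_pos
    have hcard : Nat.card K < Nat.card K₁ := by nlinarith
    have htop : K₁ = ⊤ := by
      by_contra h
      exact absurd (hmax K₁ h) (not_le.mpr hcard)
    refine ⟨hcard, htop, ?_⟩
    rw [h1, htop, Subgroup.index_top]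
    norm_cast
  refine ⟨main, ?_⟩
  rintro ⟨H, φ, hlin, heq⟩
  obtain ⟨-, hHtop, hχ1⟩ := main H φ hlin heq
  subst hHtop
  haveI : Fintype G := Fintype.ofFinite G
  have hconj : ∀ a b : (⊤ : Subgroup G), φ (a * b * a⁻¹) = φ b := by
    intro a b
    have hia : φ a * φ a⁻¹ = 1 := by
      rw [← hlin.2, mul_inv_cancel, hlin.1]
    calc φ (a * b * a⁻¹) = φ (a * b) * φ a⁻¹ := hlin.2 _ _
      _ = φ a * φ b * φ a⁻¹ := by rw [hlin.2]
      _ = φ b * (φ a * φ a⁻¹) := by ring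
      _ = φ b := by rw [hia, mul_one]
  have hψ : ∀ g : G, χ g = φ ⟨g, trivial⟩ := by
    intro g
    rw [heq]
    unfold indChar
    rw [finsum_eq_sum_of_fintype]
    have hterm : ∀ x : G,
        (if h : x * g * x⁻¹ ∈ (⊤ : Subgroup G) then φ ⟨x * g * x⁻¹, h⟩ else 0)
          = φ ⟨g, trivial⟩ := by
      intro x
      rw [dif_pos (Subgroup.mem_top _)]
      have he : (⟨x * g * x⁻¹, trivial⟩ : (⊤ : Subgroup G))
          = ⟨x, trivial⟩ * ⟨g, trivial⟩ * (⟨x, trivial⟩ : (⊤ : Subgroup G))⁻¹ := rfl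
      rw [he, hconj]
    rw [Finset.sum_congr rfl (fun x _ => hterm x), Finset.sum_const, Finset.card_univ,
      nsmul_eq_mul, Subgroup.card_top, Nat.card_eq_fintype_card, ← mul_assoc,
      inv_mul_cancel₀ (by exact_mod_cast Fintype.card_ne_zero : (Fintype.card G : ℂ) ≠ 0),
      one_mul]
  have hmul : ∀ a b : G, χ (a * b) = χ a * χ b := by
    intro a b
    rw [hψ, hψ, hψ]
    exact hlin.2 ⟨a, trivial⟩ ⟨b, trivial⟩
  have hinv1 : ∀ a : G, χ a * χ a⁻¹ = 1 := by
    intro a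
    rw [← hmul, mul_inv_cancel, hχ1]
  let N : Subgroup G :=
    { carrier := {g | χ g = 1}
      one_mem' := hχ1
      mul_mem' := by
        intro a b ha hb
        simp only [Set.mem_setOf_eq] at *
        rw [hmul, ha, hb, one_mul]
      inv_mem' := by
        intro a ha
        simp only [Set.mem_setOf_eq] at *
        have := hinv1 a
        rw [ha, one_mul] at this
        exact this }
  have hNmem : ∀ g : G, g ∈ N ↔ χ g = 1 := fun g => Iff.rfl
  have hNnormal : N.Normal := by
    constructor
    intro n hn g
    have : χ (g * n * g⁻¹) = 1 := by
      rw [hmul, hmul, (hNmem n).mp hn, mul_one, hinv1]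
    exact (hNmem _).mpr this
  rcases hNnormal.eq_bot_or_eq_top with hbot | htop
  · apply hna
    intro a b
    have hcomm : χ (a * b) = χ (b * a) := by rw [hmul, hmul]; ring
    have h1 : χ ((a * b) * (b * a)⁻¹) = 1 := by
      rw [hmul, hcomm, hinv1]
    have h2 : (a * b) * (b * a)⁻¹ ∈ N := (hNmem _).mpr h1
    rw [hbot, Subgroup.mem_bot] at h2
    exact mul_inv_eq_one.mp h2
  · apply hnp
    funext g
    exact (hNmem g).mp (htop ▸ Subgroup.mem_top g)
end

section
/- Let G = SL(2,3). Then the irreducible characters of G of degree 2 are not constituents of (1_M)^G for any maximal subgroup M of G; i.e., they are not P-characters. -/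
open scoped BigOperators Classical

open CategoryTheory Module



abbrev G3 := Matrix.SpecialLinearGroup (Fin 2) (ZMod 3)
instance mdec : DecidableEq (Matrix (Fin 2) (Fin 2) (ZMod 3)) := fun A B =>
  letI : Decidable (∀ i j, A i j = B i j) :=
    @Nat.decidableForallFin 2 _ fun i => @Nat.decidableForallFin 2 _ fun j => ZMod.decidableEq 3 (A i j) (B i j)
  decidable_of_iff (∀ i j, A i j = B i j) ⟨fun h => by ext i j; exact h i j, fun h i j => by rw [h]⟩
instance gdec : DecidableEq G3 := fun x y => decidable_of_iff (x.1 = y.1) Subtype.ext_iff.symm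
instance gfin : Fintype G3 := Subtype.fintype _

namespace SL23
def a : G3 := ⟨!![1,1;0,1], by decide⟩
def b : G3 := ⟨!![1,0;1,1], by decide⟩
def i : G3 := a * b⁻¹ * a
def z : G3 := i * i
def j : G3 := a * i * a⁻¹
def s₀ : G3 := ⟨!![0,1;2,1], by decide⟩

lemma hzc : ∀ g : G3, z * g = g * z := by decide
lemma hz2 : z * z = 1 := by decide
lemma hji : j * i = z * (i * j) := by decide
lemma hjj : j * j = z := by decide
lemma hks : i * j = s₀ * i * s₀⁻¹ := by decide
lemma ha3 : a * a * a = 1 := by decide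
lemma hb3 : b * b * b = 1 := by decide
lemma hcov : ∀ g : G3, ∃ m, m < 3 ∧ ∃ q,
    (q = 1 ∨ q = z ∨ q = i ∨ q = z*i ∨ q = j ∨ q = z*j ∨ q = i*j ∨ q = z*(i*j)) ∧
    g = q * a^m := by decide

lemma schur_scalar (V : FDRep ℂ G3) [Simple V]
    (w : G3) (hw : ∀ g : G3, w * g = g * w) :
    ∃ c : ℂ, V.ρ w = c • (1 : V →ₗ[ℂ] V) := by
  let f : V ⟶ V := ⟨FGModuleCat.ofHom (V.ρ w), by
    intro g
    ext x
    have h := congrArg V.ρ (hw g)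
    rw [map_mul, map_mul] at h
    change (V.ρ w) ((V.ρ g) x) = (V.ρ g) ((V.ρ w) x)
    exact LinearMap.congr_fun h x⟩
  obtain ⟨c, hc⟩ := CategoryTheory.endomorphism_simple_eq_smul_id ℂ f
  refine ⟨c, ?_⟩
  have h := congrArg Action.Hom.hom hc
  rw [Action.smul_hom, Action.id_hom] at h
  have h' := congrArg (fun φ => φ.hom.hom) h
  simp at h'
  exact h'.symm

variable (V : FDRep ℂ G3)

lemma smul_one_mul_smul_one (u v : ℂ) :
    (u • (1 : V →ₗ[ℂ] V)) * (v • (1 : V →ₗ[ℂ] V)) = (u * v) • (1 : V →ₗ[ℂ] V) := by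
  rw [smul_mul_smul_comm, one_mul]

lemma smul_one_inj (h2 : finrank ℂ V = 2) (u v : ℂ)
    (h : (u • (1 : V →ₗ[ℂ] V)) = v • (1 : V →ₗ[ℂ] V)) : u = v := by
  have ht := congrArg (LinearMap.trace ℂ V) h
  rw [map_smul, map_smul, LinearMap.trace_one, h2] at ht
  have : (2:ℂ) ≠ 0 := by norm_num
  simp only [smul_eq_mul] at ht
  exact mul_right_cancel₀ (by exact_mod_cast this) ht

lemma char_eq_trace (g : G3) : V.character g = LinearMap.trace ℂ V (V.ρ g) := rfl

lemma no_trivial_z [Simple V] (h2 : finrank ℂ V = 2) (hz1 : V.ρ z = 1) : False := by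
  have h2' : ((finrank ℂ V : ℕ) : ℂ) = 2 := by rw [h2]; norm_num
  have hAA : V.ρ i * V.ρ i = 1 := by rw [← map_mul, show i * i = z from rfl, hz1]
  have haainv : V.ρ a * V.ρ a⁻¹ = 1 := by rw [← map_mul, mul_inv_cancel, map_one]
  have hBdef : V.ρ j = V.ρ a * V.ρ i * V.ρ a⁻¹ := by
    rw [show j = a * i * a⁻¹ from rfl, map_mul, map_mul]
  have hBB : V.ρ j * V.ρ j = 1 := by rw [← map_mul, hjj, hz1]
  have hABBA : V.ρ j * V.ρ i = V.ρ i * V.ρ j := by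
    have h := congrArg V.ρ hji
    rw [map_mul, map_mul, map_mul, hz1, one_mul] at h
    exact h
  have htrB : LinearMap.trace ℂ V (V.ρ j) = LinearMap.trace ℂ V (V.ρ i) := by
    rw [← char_eq_trace, ← char_eq_trace, show j = a * i * a⁻¹ from rfl]
    exact FDRep.char_conj V i a
  have htrC : LinearMap.trace ℂ V (V.ρ i * V.ρ j) = LinearMap.trace ℂ V (V.ρ i) := by
    rw [← map_mul, ← char_eq_trace, ← char_eq_trace, hks]
    exact FDRep.char_conj V i s₀
  by_cases hA1 : V.ρ i = 1
  · -- scalar representation case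
    have hB1 : V.ρ j = 1 := by rw [hBdef, hA1, mul_one, haainv]
    have hall : ∀ g : G3, ∃ m : ℕ, V.ρ g = (V.ρ a) ^ m := by
      intro g
      obtain ⟨m, _, q, hq, rfl⟩ := hcov g
      refine ⟨m, ?_⟩
      have hq1 : V.ρ q = 1 := by
        rcases hq with rfl|rfl|rfl|rfl|rfl|rfl|rfl|rfl <;>
          simp [map_mul, hA1, hB1, hz1, map_one]
      rw [map_mul, map_pow, hq1, one_mul]
    let fT : V ⟶ V := ⟨FGModuleCat.ofHom (V.ρ a), by
      intro g
      ext x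
      change (V.ρ a) ((V.ρ g) x) = (V.ρ g) ((V.ρ a) x)
      obtain ⟨m, hm⟩ := hall g
      rw [hm]
      exact LinearMap.congr_fun (pow_mul_comm' (V.ρ a) m).symm x⟩
    obtain ⟨d, hd⟩ := CategoryTheory.endomorphism_simple_eq_smul_id ℂ fT
    have hT : V.ρ a = d • (1 : V →ₗ[ℂ] V) := by
      have h := congrArg Action.Hom.hom hd
      rw [Action.smul_hom, Action.id_hom] at h
      have h' := congrArg (fun φ => φ.hom.hom) h
      simp at h'
      exact h'.symm
    have hscal : ∀ g : G3, ∃ e : ℂ, V.ρ g = e • (1 : V →ₗ[ℂ] V) := by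
      intro g; obtain ⟨m, hm⟩ := hall g
      exact ⟨d ^ m, by rw [hm, hT, smul_pow, one_pow]⟩
    have hterm : ∀ g : G3, V.character g * V.character g⁻¹ = 4 := by
      intro g
      obtain ⟨e, he⟩ := hscal g
      obtain ⟨e', he'⟩ := hscal g⁻¹
      have hee : e * e' = 1 := by
        have h1 : V.ρ g * V.ρ g⁻¹ = 1 := by rw [← map_mul, mul_inv_cancel, map_one]
        rw [he, he', smul_one_mul_smul_one] at h1
        have := smul_one_inj V h2 (e * e') 1 (by rw [h1, one_smul])
        exact this
      have hcg : V.character g = e * 2 := by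
        rw [char_eq_trace, he, map_smul, LinearMap.trace_one, h2', smul_eq_mul]
      have hcg' : V.character g⁻¹ = e' * 2 := by
        rw [char_eq_trace, he', map_smul, LinearMap.trace_one, h2', smul_eq_mul]
      rw [hcg, hcg']
      calc e * 2 * (e' * 2) = (e * e') * 4 := by ring
        _ = 4 := by rw [hee, one_mul]
    have hne : ((Fintype.card G3) : ℂ) ≠ 0 := by exact_mod_cast Fintype.card_ne_zero
    have horth := FDRep.char_orthonormal (k := ℂ) (G := G3) V V
    rw [if_pos ⟨Iso.refl V⟩] at horth
    rw [show (∑ g : G3, V.character g * V.character g⁻¹)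
        = ∑ _g : G3, (4:ℂ) from Finset.sum_congr rfl fun g _ => hterm g,
      Finset.sum_const, Finset.card_univ, nsmul_eq_mul, ← mul_assoc,
      Nat.card_eq_fintype_card, inv_mul_cancel₀ hne, one_mul] at horth
    norm_num at horth
  · by_cases hAm : V.ρ i = -1
    · -- ρ i = -1 case
      have hB : V.ρ j = -1 := by
        rw [hBdef, hAm, mul_neg, mul_one, neg_mul, haainv]
      have hC1 : V.ρ i * V.ρ j = 1 := by rw [hAm, hB, neg_mul_neg, one_mul]
      have h1 : LinearMap.trace ℂ V (V.ρ i * V.ρ j) = 2 := by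
        rw [hC1, LinearMap.trace_one, h2']
      have hAtr : LinearMap.trace ℂ V (V.ρ i) = -2 := by
        rw [hAm, map_neg, LinearMap.trace_one, h2']
      rw [htrC, hAtr] at h1
      norm_num at h1
    · -- non-scalar involution case
      have hAAx : ∀ x : V, V.ρ i (V.ρ i x) = x := by
        intro x
        have h := LinearMap.ext_iff.mp hAA x
        simpa using h
      have hBBx : ∀ x : V, V.ρ j (V.ρ j x) = x := by
        intro x
        have h := LinearMap.ext_iff.mp hBB x
        simpa using h
      have hABx : ∀ x : V, V.ρ j (V.ρ i x) = V.ρ i (V.ρ j x) := by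
        intro x
        have h := LinearMap.ext_iff.mp hABBA x
        simpa using h
      set Lp := LinearMap.ker (V.ρ i - 1) with hLpdef
      set Lm := LinearMap.ker (V.ρ i + 1) with hLmdef
      have memp : ∀ x : V, x ∈ Lp ↔ V.ρ i x = x := by
        intro x
        rw [hLpdef, LinearMap.mem_ker, LinearMap.sub_apply, Module.End.one_apply, sub_eq_zero]
      have memm : ∀ x : V, x ∈ Lm ↔ V.ρ i x = -x := by
        intro x
        rw [hLmdef, LinearMap.mem_ker, LinearMap.add_apply, Module.End.one_apply,
          add_eq_zero_iff_eq_neg]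
      have hLpbot : Lp ≠ ⊥ := by
        intro h
        apply hAm
        ext x
        have hy : V.ρ i x + x ∈ Lp := by
          rw [memp, map_add, hAAx, add_comm]
        rw [h, Submodule.mem_bot] at hy
        have hx : V.ρ i x = -x := eq_neg_of_add_eq_zero_left hy
        simpa using hx
      have hLmbot : Lm ≠ ⊥ := by
        intro h
        apply hA1
        ext x
        have hy : V.ρ i x - x ∈ Lm := by
          rw [memm, map_sub, hAAx, neg_sub]
        rw [h, Submodule.mem_bot] at hy
        have hx : V.ρ i x = x := by
          have := sub_eq_zero.mp hy
          exact this
        simpa using hx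
      obtain ⟨vp, hvpL, hvp0⟩ := Submodule.exists_mem_ne_zero_of_ne_bot hLpbot
      obtain ⟨vm, hvmL, hvm0⟩ := Submodule.exists_mem_ne_zero_of_ne_bot hLmbot
      have hvp : V.ρ i vp = vp := (memp vp).mp hvpL
      have hvm : V.ρ i vm = -vm := (memm vm).mp hvmL
      have hdisj : Lp ⊓ Lm = ⊥ := by
        rw [eq_bot_iff]
        rintro x hx
        obtain ⟨hx1, hx2⟩ := Submodule.mem_inf.mp hx
        have e1 := (memp x).mp hx1
        have e2 := (memm x).mp hx2
        have : (2:ℂ) • x = 0 := by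
          rw [two_smul]
          nth_rewrite 1 [← e1]
          rw [e2, neg_add_cancel]
        rw [Submodule.mem_bot]
        have h20 : (2:ℂ) ≠ 0 := by norm_num
        exact (smul_eq_zero.mp this).resolve_left h20
      have hrp : finrank ℂ Lp = 1 ∧ finrank ℂ Lm = 1 := by
        have hsum := Submodule.finrank_sup_add_finrank_inf_eq Lp Lm
        rw [hdisj, finrank_bot, add_zero] at hsum
        have hle : finrank ℂ ↥(Lp ⊔ Lm) ≤ 2 := by
          have hle' := Submodule.finrank_le (Lp ⊔ Lm)
          rw [h2] at hle'
          exact hle'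
        have hp1 : 1 ≤ finrank ℂ Lp := by
          have hsp : (ℂ ∙ vp) ≤ Lp := by
            rw [Submodule.span_singleton_le_iff_mem]; exact hvpL
          have := Submodule.finrank_mono hsp
          rwa [finrank_span_singleton hvp0] at this
        have hm1 : 1 ≤ finrank ℂ Lm := by
          have hsp : (ℂ ∙ vm) ≤ Lm := by
            rw [Submodule.span_singleton_le_iff_mem]; exact hvmL
          have := Submodule.finrank_mono hsp
          rwa [finrank_span_singleton hvm0] at this
        omega
      have hspan : (ℂ ∙ vp) = Lp := by
        apply Submodule.eq_of_le_of_finrank_le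
        · rw [Submodule.span_singleton_le_iff_mem]; exact hvpL
        · rw [hrp.1, finrank_span_singleton hvp0]
      have hspanm : (ℂ ∙ vm) = Lm := by
        apply Submodule.eq_of_le_of_finrank_le
        · rw [Submodule.span_singleton_le_iff_mem]; exact hvmL
        · rw [hrp.2, finrank_span_singleton hvm0]
      have hBvp : V.ρ j vp ∈ Lp := by
        rw [memp, ← hABx, hvp]
      have hBvm : V.ρ j vm ∈ Lm := by
        rw [memm, ← hABx, hvm, map_neg]
      rw [← hspan] at hBvp
      rw [← hspanm] at hBvm
      obtain ⟨μ, hμ⟩ := Submodule.mem_span_singleton.mp hBvp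
      obtain ⟨ν, hν⟩ := Submodule.mem_span_singleton.mp hBvm
      have hμμ : μ * μ = 1 := by
        have h1 : V.ρ j (V.ρ j vp) = vp := hBBx vp
        rw [← hμ, map_smul, ← hμ, smul_smul] at h1
        have h2 : (μ * μ - 1) • vp = 0 := by
          rw [sub_smul, one_smul, h1, sub_self]
        rcases smul_eq_zero.mp h2 with h | h
        · exact sub_eq_zero.mp h
        · exact absurd h hvp0
      have hli : LinearIndependent ℂ ![vp, vm] := by
        rw [LinearIndependent.pair_iff]
        intro s t hst
        have hst2 : s • vp - t • vm = 0 := by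
          have happ := congrArg (V.ρ i) hst
          rw [map_add, map_smul, map_smul, hvp, hvm, map_zero, smul_neg,
            ← sub_eq_add_neg] at happ
          exact happ
        have hs : s • vp = 0 := by
          have := congrArg₂ (· + ·) hst hst2
          simp only [add_zero] at this
          have h2 : (2:ℂ) • (s • vp) = 0 := by
            rw [two_smul]
            calc s • vp + s • vp = s • vp + t • vm + (s • vp - t • vm) := by abel
              _ = 0 := by rw [hst, hst2, add_zero]
          have h20 : (2:ℂ) ≠ 0 := by norm_num
          exact (smul_eq_zero.mp h2).resolve_left h20
        have hs0 : s = 0 := by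
          rcases smul_eq_zero.mp hs with h | h
          · exact h
          · exact absurd h hvp0
        refine ⟨hs0, ?_⟩
        rw [hs0, zero_smul, zero_add] at hst
        rcases smul_eq_zero.mp hst with h | h
        · exact h
        · exact absurd h hvm0
      have hcard : Fintype.card (Fin 2) = finrank ℂ V := by
        rw [Fintype.card_fin, h2]
      let bas : Basis (Fin 2) ℂ V := basisOfLinearIndependentOfCardEqFinrank hli hcard
      have hb0 : bas 0 = vp := by
        rw [show bas = basisOfLinearIndependentOfCardEqFinrank hli hcard from rfl,
          coe_basisOfLinearIndependentOfCardEqFinrank]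
        rfl
      have hb1 : bas 1 = vm := by
        rw [show bas = basisOfLinearIndependentOfCardEqFinrank hli hcard from rfl,
          coe_basisOfLinearIndependentOfCardEqFinrank]
        rfl
      have htr : ∀ (f : V →ₗ[ℂ] V) (p q : ℂ), f vp = p • vp → f vm = q • vm →
          LinearMap.trace ℂ V f = p + q := by
        intro f p q hp hq
        rw [LinearMap.trace_eq_matrix_trace ℂ bas, Matrix.trace_fin_two]
        have e00 : LinearMap.toMatrix bas bas f 0 0 = p := by
          rw [LinearMap.toMatrix_apply, hb0, hp, ← hb0, map_smul, Basis.repr_self]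
          simp
        have e11 : LinearMap.toMatrix bas bas f 1 1 = q := by
          rw [LinearMap.toMatrix_apply, hb1, hq, ← hb1, map_smul, Basis.repr_self]
          simp
        rw [e00, e11]
      have trA : LinearMap.trace ℂ V (V.ρ i) = 1 + (-1) := by
        apply htr
        · rw [hvp, one_smul]
        · rw [hvm, neg_smul, one_smul]
      have trB : LinearMap.trace ℂ V (V.ρ j) = μ + ν := by
        apply htr
        · exact hμ.symm
        · exact hν.symm
      have trC : LinearMap.trace ℂ V (V.ρ i * V.ρ j) = μ + (-ν) := by
        apply htr
        · show V.ρ i (V.ρ j vp) = μ • vp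
          rw [← hμ, map_smul, hvp]
        · show V.ρ i (V.ρ j vm) = (-ν) • vm
          rw [← hν, map_smul, hvm, smul_neg, neg_smul]
      rw [trB, trA] at htrB
      rw [trC, trA] at htrC
      have hμ0 : μ = 0 := by linear_combination (htrB + htrC) / 2
      rw [hμ0, mul_zero] at hμμ
      norm_num at hμμ

lemma rho_z [Simple V] (h2 : finrank ℂ V = 2) :
    V.ρ z = (-1 : ℂ) • (1 : V →ₗ[ℂ] V) := by
  obtain ⟨c, hc⟩ := schur_scalar V z hzc
  have hcc : c * c = 1 := by
    have h1 : V.ρ z * V.ρ z = 1 := by rw [← map_mul, hz2, map_one]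
    rw [hc, smul_one_mul_smul_one] at h1
    exact smul_one_inj V h2 (c * c) 1 (by rw [h1, one_smul])
  rcases mul_self_eq_one_iff.mp hcc with h1 | hm1
  · exact absurd (by rw [hc, h1, one_smul] : V.ρ z = 1) fun h => (no_trivial_z V h2 h).elim
  · rw [hc, hm1]


open Pointwise


lemma zpow_mem_pair (w : G3) (hw : w ∈ Subgroup.zpowers z) : w * w = 1 ∧ ∀ g, w * g = g * w := by
  obtain ⟨k, rfl⟩ := hw
  have h2 : z ^ (2:ℤ) = 1 := by
    rw [show (2:ℤ) = 1 + 1 from rfl, zpow_add, zpow_one, hz2]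
  constructor
  · calc z ^ k * z ^ k = z ^ (k + k) := (zpow_add z k k).symm
      _ = z ^ ((2:ℤ) * k) := by rw [two_mul]
      _ = (z ^ (2:ℤ)) ^ k := zpow_mul z 2 k
      _ = 1 := by rw [h2, one_zpow]
  · intro g
    exact (Commute.zpow_left (hzc g) k).eq

lemma z_mem_coatom (M : Subgroup G3) (hM : IsCoatom M) : z ∈ M := by
  by_contra hzM
  haveI hnormal : (Subgroup.zpowers z).Normal := by
    constructor
    intro n hn g
    have h := (zpow_mem_pair n hn).2 g
    have hgn : g * n * g⁻¹ = n := by rw [← h, mul_assoc, mul_inv_cancel, mul_one]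
    rw [hgn]; exact hn
  have hlt : M < M ⊔ Subgroup.zpowers z := by
    refine lt_of_le_of_ne le_sup_left fun h => hzM ?_
    have hmem : z ∈ M ⊔ Subgroup.zpowers z :=
      Subgroup.mem_sup_right (Subgroup.mem_zpowers z)
    rwa [← h] at hmem
  have htop : M ⊔ Subgroup.zpowers z = ⊤ := hM.2 _ hlt
  have hdecomp : ∀ x : G3, ∃ m ∈ M, ∃ w ∈ Subgroup.zpowers z, m * w = x := by
    intro x
    have hx : x ∈ ((M : Set G3) * (Subgroup.zpowers z : Set G3)) := by
      rw [← Subgroup.mul_normal, htop]; trivial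
    obtain ⟨m, hm, w, hw, hmw⟩ := hx
    exact ⟨m, hm, w, hw, hmw⟩
  have horder3 : ∀ x : G3, x * x * x = 1 → x ∈ M := by
    intro x hx
    obtain ⟨m, hm, w, hw, rfl⟩ := hdecomp x
    obtain ⟨hw2, hwc⟩ := zpow_mem_pair w hw
    have hexp : m * w * (m * w) * (m * w) = m * m * m * w := by
      have h1 := hwc m
      calc m * w * (m * w) * (m * w) = m * (w * m) * (w * m) * w := by group
        _ = m * (m * w) * (m * w) * w := by rw [h1]
        _ = m * m * (w * m) * (w * w) := by group
        _ = m * m * (m * w) * (w * w) := by rw [h1]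
        _ = m * m * m * (w * (w * w)) := by group
        _ = m * m * m * w := by rw [hw2, mul_one]
    rw [hexp] at hx
    have hwM : w ∈ M := by
      have hww : w = (m * m * m)⁻¹ := eq_inv_of_mul_eq_one_right hx
      rw [hww]
      exact M.inv_mem (M.mul_mem (M.mul_mem hm hm) hm)
    exact M.mul_mem hm hwM
  have hiM : i ∈ M := by
    have haM : a ∈ M := horder3 a ha3
    have hbM : b ∈ M := horder3 b hb3
    exact M.mul_mem (M.mul_mem haM (M.inv_mem hbM)) haM
  exact hzM (M.mul_mem hiM hiM)


end SL23

lemma inner_perm {G : Type} [Group G] [Fintype G] (χ : G → ℂ)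
    (hcl : ∀ g h : G, χ (g * h) = χ (h * g)) (M : Subgroup G) :
    charInner G χ (permChar M) = (Nat.card M : ℂ)⁻¹ * ∑ g : G, (if g ∈ M then χ g else 0) := by
  classical
  have hperm : ∀ g : G, permChar M g
      = (Nat.card M : ℂ)⁻¹ * ∑ x : G, (if x * g * x⁻¹ ∈ M then (1:ℂ) else 0) := by
    intro g
    rw [permChar, indChar, finsum_eq_sum_of_fintype]
    simp only [dite_eq_ite]
  have hstar : ∀ g : G, (starRingEnd ℂ) (permChar M g) = permChar M g := by
    intro g
    rw [hperm g, map_mul, map_inv₀, map_natCast, map_sum]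
    congr 1
    refine Finset.sum_congr rfl fun x _ => ?_
    split <;> simp
  have key : ∀ x : G, ∑ g : G, χ g * (if x * g * x⁻¹ ∈ M then (1:ℂ) else 0)
      = ∑ g : G, (if g ∈ M then χ g else 0) := by
    intro x
    refine (Fintype.sum_equiv ⟨fun g => x⁻¹ * g * x, fun g => x * g * x⁻¹,
      fun g => by group, fun g => by group⟩ _ _ fun g => ?_).symm
    show (if g ∈ M then χ g else 0) = χ (x⁻¹ * g * x) * (if x * (x⁻¹ * g * x) * x⁻¹ ∈ M then (1:ℂ) else 0)
    have e2 : x * (x⁻¹ * g * x) * x⁻¹ = g := by group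
    have e3 : χ (x⁻¹ * g * x) = χ g := by
      rw [show x⁻¹ * g * x = (x⁻¹ * g) * x by group, hcl, ← mul_assoc, mul_inv_cancel, one_mul]
    rw [e2, e3]
    split <;> simp
  rw [charInner, finsum_eq_sum_of_fintype]
  simp_rw [hstar, hperm]
  have h1 : ∀ g : G, χ g * ((Nat.card M : ℂ)⁻¹ * ∑ x : G, (if x * g * x⁻¹ ∈ M then (1:ℂ) else 0))
      = (Nat.card M : ℂ)⁻¹ * ∑ x : G, χ g * (if x * g * x⁻¹ ∈ M then (1:ℂ) else 0) := by
    intro g; simp only [Finset.mul_sum]; exact Finset.sum_congr rfl fun x _ => by ring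
  rw [Finset.sum_congr rfl (fun g _ => h1 g), ← Finset.mul_sum, Finset.sum_comm]
  simp_rw [key]
  rw [Finset.sum_const, Finset.card_univ, nsmul_eq_mul, Nat.card_eq_fintype_card]
  have hG : (Fintype.card G : ℂ) ≠ 0 := by exact_mod_cast Fintype.card_ne_zero
  field_simp

/-- In `G = SL(2,3)`, no irreducible character of degree `2` is a constituent of `(1_M)^G`
for any maximal subgroup `M` of `G`. -/
theorem stmt15 (χ : Matrix.SpecialLinearGroup (Fin 2) (ZMod 3) → ℂ)
    (hχ : IsIrrChar (Matrix.SpecialLinearGroup (Fin 2) (ZMod 3)) χ) (hdeg : χ 1 = 2) :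
    ∀ M : Subgroup (Matrix.SpecialLinearGroup (Fin 2) (ZMod 3)), IsCoatom M →
      charInner (Matrix.SpecialLinearGroup (Fin 2) (ZMod 3)) χ (permChar M) = 0 := by
  intro M hM
  obtain ⟨V, hsimp, hchar⟩ := hχ
  haveI := hsimp
  subst hchar
  have h2 : Module.finrank ℂ V = 2 := by
    have h := FDRep.char_one V
    rw [hdeg] at h
    exact_mod_cast h.symm
  have hneg : ∀ g : G3, FDRep.character V (SL23.z * g) = - FDRep.character V g := by
    intro g
    rw [SL23.char_eq_trace, SL23.char_eq_trace, map_mul, SL23.rho_z V h2,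
      smul_mul_assoc, one_mul, map_smul, smul_eq_mul, neg_one_mul]
  rw [inner_perm (FDRep.character V) (fun g h => FDRep.char_mul_comm V h g) M]
  have hzM := SL23.z_mem_coatom M hM
  have hS : ∑ g : G3, (if g ∈ M then FDRep.character V g else 0) = 0 := by
    have h1 : ∑ x : G3, (if x ∈ M then -(FDRep.character V x) else 0)
        = ∑ g : G3, (if g ∈ M then FDRep.character V g else 0) := by
      refine Fintype.sum_equiv (Equiv.mulLeft SL23.z) _ _ fun x => ?_
      show (if x ∈ M then -(FDRep.character V x) else 0)
        = (if SL23.z * x ∈ M then FDRep.character V (SL23.z * x) else 0)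
      rw [Subgroup.mul_mem_cancel_left M hzM]
      by_cases hx : x ∈ M
      · rw [if_pos hx, if_pos hx, hneg x]
      · rw [if_neg hx, if_neg hx]
    have h2' : ∑ x : G3, (if x ∈ M then -(FDRep.character V x) else 0)
        = - ∑ g : G3, (if g ∈ M then FDRep.character V g else 0) := by
      rw [← Finset.sum_neg_distrib]
      refine Finset.sum_congr rfl fun x _ => ?_
      by_cases hx : x ∈ M
      · rw [if_pos hx, if_pos hx]
      · rw [if_neg hx, if_neg hx, neg_zero]
    have h3 : - ∑ g : G3, (if g ∈ M then FDRep.character V g else 0)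
        = ∑ g : G3, (if g ∈ M then FDRep.character V g else 0) := by rw [← h2', h1]
    have h4 : (∑ g : G3, (if g ∈ M then FDRep.character V g else 0))
        + ∑ g : G3, (if g ∈ M then FDRep.character V g else 0) = 0 := by
      nth_rewrite 1 [← h3]
      rw [neg_add_cancel]
    exact add_self_eq_zero.mp h4
  rw [hS, mul_zero]
end

section
/- A finite group G is nilpotent if and only if every irreducible constituent of (1_M)^G, as M ranges over all maximal subgroups of G, is linear (has degree 1). -/
open scoped BigOperators Classical

open Module Representation CategoryTheory

section Tools
variable {G : Type} [Group G]

/-- restriction of a representation to an invariant submodule -/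
noncomputable def subRep {V : Type} [AddCommGroup V] [Module ℂ V]
    (ρ : Representation ℂ G V) (p : Submodule ℂ V)
    (hp : ∀ g, ∀ v ∈ p, ρ g v ∈ p) : Representation ℂ G p where
  toFun g := (ρ g).restrict (fun v hv => hp g v hv)
  map_one' := by ext v; simp [LinearMap.restrict_apply]
  map_mul' g h := by ext v; simp [LinearMap.restrict_apply]

@[simp] lemma subRep_apply {V : Type} [AddCommGroup V] [Module ℂ V]
    (ρ : Representation ℂ G V) (p : Submodule ℂ V)
    (hp : ∀ g, ∀ v ∈ p, ρ g v ∈ p) (g : G) (v : p) :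
    (subRep ρ p hp g v : V) = ρ g (v : V) := rfl

variable [Finite G]

lemma permChar_apply (M : Subgroup G) (g : G) :
    permChar M g = (Nat.card M : ℂ)⁻¹ *
      ∑ᶠ x : G, if x * g * x⁻¹ ∈ M then (1 : ℂ) else 0 := by
  unfold permChar indChar
  congr 1

lemma conj_permChar (M : Subgroup G) (g : G) :
    (starRingEnd ℂ) (permChar M g) = permChar M g := by
  letI : Fintype G := Fintype.ofFinite G
  rw [permChar_apply, finsum_eq_sum_of_fintype]
  rw [map_mul, map_inv₀, map_natCast, map_sum]
  congr 1
  apply Finset.sum_congr rfl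
  intro x _
  split_ifs <;> simp


lemma char_conj' (V : FDRep ℂ G) (x y : G) :
    V.character (x⁻¹ * y * x) = V.character y := by
  simpa using FDRep.char_conj V y x⁻¹

/-- Frobenius-reciprocity-style computation. -/
lemma charInner_char_permChar (V : FDRep ℂ G) (M : Subgroup G) :
    charInner G V.character (permChar M) =
      (Nat.card M : ℂ)⁻¹ * ∑ᶠ m : M, V.character m := by
  letI : Fintype G := Fintype.ofFinite G
  letI : Fintype M := Fintype.ofFinite M
  unfold charInner
  rw [finsum_eq_sum_of_fintype, finsum_eq_sum_of_fintype]
  simp_rw [conj_permChar]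
  have expand : ∀ g : G, V.character g * permChar M g
      = (Nat.card M : ℂ)⁻¹ * ∑ x : G,
          V.character g * (if x * g * x⁻¹ ∈ M then (1:ℂ) else 0) := by
    intro g
    rw [permChar_apply, finsum_eq_sum_of_fintype, mul_left_comm, Finset.mul_sum]
  simp_rw [expand]
  rw [← Finset.mul_sum, Finset.sum_comm]
  have key : ∀ x : G, (∑ g : G, V.character g * if x * g * x⁻¹ ∈ M then (1:ℂ) else 0)
      = ∑ m : M, V.character ↑m := by
    intro x
    have h1 : (∑ y : G, if y ∈ M then V.character y else 0)
        = ∑ g : G, V.character g * (if x * g * x⁻¹ ∈ M then (1:ℂ) else 0) := by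
      apply Fintype.sum_bijective (fun y : G => x⁻¹ * y * x)
        (((Equiv.mulLeft x⁻¹).trans (Equiv.mulRight x)).bijective)
      intro y
      have hc : x * (x⁻¹ * y * x) * x⁻¹ = y := by group
      rw [hc, char_conj']
      split_ifs <;> simp
    rw [← h1]
    have h2 : ∀ y : G, y ∈ Finset.univ.filter (· ∈ M) ↔ y ∈ M := by
      intro y; simp
    rw [← Finset.sum_filter, Finset.sum_subtype _ h2]
  simp_rw [key]
  rw [Finset.sum_const, Finset.card_univ, nsmul_eq_mul]
  have hG : (Fintype.card G : ℂ) ≠ 0 := Nat.cast_ne_zero.mpr Fintype.card_ne_zero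
  simp only [Nat.card_eq_fintype_card]
  field_simp
lemma charInner_eq_finrank_invariants (V : FDRep ℂ G) (M : Subgroup G) :
    charInner G V.character (permChar M) =
      (finrank ℂ (Representation.invariants (V.ρ.comp M.subtype)) : ℂ) := by
  letI : Fintype M := Fintype.ofFinite M
  haveI : Invertible (Fintype.card M : ℂ) :=
    invertibleOfNonzero (Nat.cast_ne_zero.mpr Fintype.card_ne_zero)
  rw [charInner_char_permChar, finsum_eq_sum_of_fintype]
  have h := FDRep.average_char_eq_finrank_invariants (FDRep.of (V.ρ.comp M.subtype))
  have hc : ∀ m : M, (FDRep.of (V.ρ.comp M.subtype)).character m = V.character ↑m :=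
    fun m => rfl
  simp_rw [hc] at h
  exact h

/-- If `V` is simple, every nonzero invariant submodule is everything. -/
lemma subrep_eq_top_of_simple (V : FDRep ℂ G) (hs : Simple V) (p : Submodule ℂ V)
    (hinv : ∀ g, ∀ v ∈ p, V.ρ g v ∈ p) (hp : p ≠ ⊥) : p = ⊤ := by
  classical
  let W : FDRep ℂ G := FDRep.of (subRep V.ρ p hinv)
  let ι : W ⟶ V := ⟨FGModuleCat.ofHom p.subtype, by intro g; rfl⟩
  have hmono : Mono ι := by
    constructor
    intro Z f g' h
    apply Action.hom_ext
    have := congrArg Action.Hom.hom h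
    simp only [Action.comp_hom] at this
    refine FGModuleCat.hom_ext ((LinearMap.ext fun z => ?_))
    have := congrArg (fun q => q.hom.hom z) this
    exact Subtype.ext this
  have hne : ι ≠ 0 := by
    obtain ⟨x, hx, hx0⟩ := Submodule.exists_mem_ne_zero_of_ne_bot hp
    intro h0
    have : ι.hom ⟨x, hx⟩ = 0 := by rw [h0]; rfl
    exact hx0 this
  haveI := hs; haveI := hmono
  have hiso : IsIso ι := isIso_of_mono_of_nonzero hne
  have hsurj : Function.Surjective p.subtype := by
    intro v
    refine ⟨(CategoryTheory.inv ι).hom v, ?_⟩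
    have := congrArg Action.Hom.hom (IsIso.inv_hom_id ι)
    simp only [Action.comp_hom, Action.id_hom] at this
    exact congrArg (fun q => q.hom.hom v) this
  rw [← Submodule.range_subtype p]
  exact LinearMap.range_eq_top.mpr hsurj

lemma hom_comm_apply' {Y X : FDRep ℂ G} (f : Y ⟶ X) (g : G) (y : Y.V) :
    f.hom (Y.ρ g y) = X.ρ g (f.hom y) := by
  exact congrArg (fun q => q.hom.hom y) (f.comm g)

lemma hom_eq_zero_iff {Y X : FDRep ℂ G} (f : Y ⟶ X) :
    f = 0 ↔ f.hom.hom.hom = 0 := by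
  constructor
  · intro h; rw [h]; rfl
  · intro h; apply Action.hom_ext; exact FGModuleCat.hom_ext h

/-- Converse: if every nonzero invariant submodule is top (and X ≠ 0), X is simple. -/
lemma simple_of_subrep (X : FDRep ℂ G) (hnt : ∃ x : X.V, x ≠ 0)
    (hmin : ∀ p : Submodule ℂ X.V, (∀ g, ∀ v ∈ p, X.ρ g v ∈ p) → p ≠ ⊥ → p = ⊤) :
    Simple X := by
  classical
  constructor
  intro Y f hm
  constructor
  · intro hiso h0
    obtain ⟨x, hx⟩ := hnt
    have hinv := congrArg Action.Hom.hom (IsIso.inv_hom_id f)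
    simp only [Action.comp_hom, Action.id_hom] at hinv
    have h2 : ((CategoryTheory.inv f).hom ≫ f.hom).hom.hom x = x :=
      congrArg (fun q => q.hom.hom x) hinv
    rw [hom_eq_zero_iff] at h0
    have : f.hom.hom.hom ((CategoryTheory.inv f).hom x) = x := h2
    rw [h0] at this
    exact hx (by simpa using this.symm)
  · intro hf0
    replace hf0 : f.hom.hom.hom ≠ 0 := fun h => hf0 ((hom_eq_zero_iff f).mpr h)
    have hrange : ∀ g, ∀ v ∈ LinearMap.range f.hom.hom.hom,
        X.ρ g v ∈ LinearMap.range f.hom.hom.hom := by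
      rintro g v ⟨y, hy⟩
      exact ⟨Y.ρ g y, by rw [← hy]; exact hom_comm_apply' f g y⟩
    have hrt : LinearMap.range f.hom.hom.hom = ⊤ := by
      apply hmin _ hrange
      intro hbot
      apply hf0
      apply LinearMap.ext
      intro y
      have : f.hom y ∈ LinearMap.range f.hom.hom.hom := ⟨y, rfl⟩
      rw [hbot] at this
      exact (Submodule.mem_bot ℂ).mp this
    have hsurj : Function.Surjective f.hom.hom.hom :=
      LinearMap.range_eq_top.mp hrt
    have hinj : Function.Injective f.hom.hom.hom := by
      rw [← LinearMap.ker_eq_bot]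
      set K := LinearMap.ker f.hom.hom.hom with hK
      have hKinv : ∀ g, ∀ v ∈ K, Y.ρ g v ∈ K := by
        intro g v hv
        have h2 : f.hom (Y.ρ g v) = X.ρ g (f.hom v) := hom_comm_apply' f g v
        rw [show f.hom v = 0 from LinearMap.mem_ker.mp hv, map_zero] at h2
        exact LinearMap.mem_ker.mpr h2
      let WK : FDRep ℂ G := FDRep.of (subRep Y.ρ K hKinv)
      let ι : WK ⟶ Y := ⟨FGModuleCat.ofHom K.subtype, by intro g; rfl⟩
      have hcomp : ι ≫ f = (0 : WK ⟶ Y) ≫ f := by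
        apply Action.hom_ext
        simp only [Action.comp_hom, Limits.zero_comp]
        refine FGModuleCat.hom_ext ((LinearMap.ext ?_))
        rintro ⟨v, hv⟩
        show f.hom (ι.hom ⟨v, hv⟩) = 0
        exact LinearMap.mem_ker.mp hv
      have hι : ι = 0 := hm.right_cancellation _ _ hcomp
      rw [hom_eq_zero_iff] at hι
      apply (Submodule.eq_bot_iff _).mpr
      intro v hv
      have := LinearMap.congr_fun hι ⟨v, hv⟩
      exact this
    let e := LinearEquiv.ofBijective f.hom.hom.hom ⟨hinj, hsurj⟩
    have hfe : ∀ y, f.hom y = e y := fun _ => rfl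
    let ginv : X ⟶ Y := ⟨FGModuleCat.ofHom e.symm.toLinearMap, by
      intro g
      refine FGModuleCat.hom_ext ((LinearMap.ext ?_))
      intro x
      apply hinj
      show f.hom (e.symm (X.ρ g x)) = f.hom (Y.ρ g (e.symm x))
      rw [hom_comm_apply', hfe, hfe, e.apply_symm_apply, e.apply_symm_apply]⟩
    refine ⟨⟨ginv, ?_, ?_⟩⟩
    · apply Action.hom_ext
      refine FGModuleCat.hom_ext ((LinearMap.ext ?_))
      intro y
      show e.symm (f.hom y) = y
      rw [hfe, e.symm_apply_apply]
    · apply Action.hom_ext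
      refine FGModuleCat.hom_ext ((LinearMap.ext ?_))
      intro x
      show f.hom (e.symm x) = x
      rw [hfe, e.apply_symm_apply]
noncomputable def permRep (M : Subgroup G) : Representation ℂ G (G ⧸ M → ℂ) where
  toFun g := LinearMap.funLeft ℂ ℂ (fun x => g⁻¹ • x)
  map_one' := by ext f x; simp [LinearMap.funLeft]
  map_mul' g h := by
    ext f x
    simp [LinearMap.funLeft, mul_smul]

lemma permRep_apply (M : Subgroup G) (g : G) (f : G ⧸ M → ℂ) (x : G ⧸ M) :
    permRep M g f x = f (g⁻¹ • x) := rfl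

lemma permRep_single (M : Subgroup G) (g : G) (q : G ⧸ M) :
    permRep M g (Pi.single q 1) = Pi.single (g • q) (1 : ℂ) := by
  funext y
  rw [permRep_apply]
  simp only [Pi.single_apply]
  congr 1
  rw [eq_comm, inv_smul_eq_iff, eq_comm]

noncomputable def sumF (α : Type) [Fintype α] : (α → ℂ) →ₗ[ℂ] ℂ where
  toFun f := ∑ x, f x
  map_add' f g := by simp [Finset.sum_add_distrib]
  map_smul' c f := by simp [Finset.mul_sum]
lemma normal_of_constituents_linear (M : Subgroup G) (hM : IsCoatom M)
    (hlin : ∀ χ : G → ℂ, IsConstituent G χ (permChar M) → χ 1 = 1) : M.Normal := by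
  classical
  letI : Fintype G := Fintype.ofFinite G
  letI : Fintype (G ⧸ M) := Fintype.ofFinite _
  set P := permRep M with hP
  -- the sum-zero subspace
  set U : Submodule ℂ (G ⧸ M → ℂ) := LinearMap.ker (sumF (G ⧸ M)) with hU
  have hUinv : ∀ g : G, ∀ f ∈ U, P g f ∈ U := by
    intro g f hf
    simp only [hU, LinearMap.mem_ker] at hf ⊢
    have h1 : ∑ x : G ⧸ M, f (g⁻¹ • x) = ∑ x : G ⧸ M, f x :=
      Fintype.sum_equiv (MulAction.toPerm g⁻¹) _ _ (fun x => rfl)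
    show ∑ x : G ⧸ M, f (g⁻¹ • x) = 0
    rw [h1]; exact hf
  -- U is nonzero
  obtain ⟨g₀, hg₀⟩ : ∃ g₀, g₀ ∉ M := by
    by_contra h
    push_neg at h
    exact hM.1 ((Subgroup.eq_top_iff' M).mpr h)
  have hab : (QuotientGroup.mk g₀ : G ⧸ M) ≠ (QuotientGroup.mk 1 : G ⧸ M) := by
    intro h
    apply hg₀
    have := QuotientGroup.eq.mp h
    simpa using this
  have hUne : U ≠ ⊥ := by
    intro h
    have hmem : (Pi.single (QuotientGroup.mk g₀ : G ⧸ M) 1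
        - Pi.single (QuotientGroup.mk 1) 1 : G ⧸ M → ℂ) ∈ U := by
      simp only [hU, LinearMap.mem_ker, map_sub]
      show (∑ x, Pi.single _ 1 x) - (∑ x, Pi.single _ 1 x) = 0
      rw [Finset.sum_pi_single', Finset.sum_pi_single']
      simp
    rw [h, Submodule.mem_bot, sub_eq_zero] at hmem
    have := congrFun hmem (QuotientGroup.mk g₀)
    simp [Pi.single_apply, hab, hab.symm] at this
  -- choose a minimal invariant subspace of U
  set S : Set ℕ := {n | ∃ p : Submodule ℂ (G ⧸ M → ℂ),
    (∀ g : G, ∀ v ∈ p, P g v ∈ p) ∧ p ≤ U ∧ p ≠ ⊥ ∧ finrank ℂ p = n} with hS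
  have hSne : S.Nonempty := ⟨finrank ℂ U, U, hUinv, le_rfl, hUne, rfl⟩
  obtain ⟨p, hpinv, hpU, hpne, hprank⟩ := Nat.sInf_mem hSne
  set X : FDRep ℂ G := FDRep.of (subRep P p hpinv) with hX
  -- X is simple
  have hsimple : Simple X := by
    apply simple_of_subrep
    · obtain ⟨x, hx, hx0⟩ := Submodule.exists_mem_ne_zero_of_ne_bot hpne
      exact ⟨⟨x, hx⟩, fun h => hx0 (by simpa using congrArg Subtype.val h)⟩
    · intro q hqinv hqne
      set q' : Submodule ℂ (G ⧸ M → ℂ) := q.map p.subtype with hq'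
      have hq'inv : ∀ g : G, ∀ v ∈ q', P g v ∈ q' := by
        rintro g v ⟨w, hw, rfl⟩
        exact ⟨subRep P p hpinv g w, hqinv g w hw, rfl⟩
      have hq'U : q' ≤ U := le_trans (Submodule.map_subtype_le p q) hpU
      have hq'ne : q' ≠ ⊥ := by
        obtain ⟨w, hw, hw0⟩ := Submodule.exists_mem_ne_zero_of_ne_bot hqne
        intro h
        let w' : p := w
        have : (w' : G ⧸ M → ℂ) ∈ q' := ⟨w', hw, rfl⟩
        rw [h, Submodule.mem_bot] at this
        exact hw0 (Subtype.ext this)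
      have hle : q' ≤ p := Submodule.map_subtype_le p q
      have h1 : finrank ℂ p ≤ finrank ℂ q' := by
        rw [hprank]
        exact Nat.sInf_le ⟨q', hq'inv, hq'U, hq'ne, rfl⟩
      have h2 : finrank ℂ q' ≤ finrank ℂ p := Submodule.finrank_mono hle
      have heq : q' = p := Submodule.eq_of_le_of_finrank_eq hle (le_antisymm h2 h1)
      have : q.map p.subtype = (⊤ : Submodule ℂ p).map p.subtype := by
        rw [Submodule.map_subtype_top]; exact heq
      exact Submodule.map_injective_of_injective (Submodule.injective_subtype p) this
  -- Maschke-type averaged projection onto p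
  obtain ⟨pc, hpc⟩ := Submodule.exists_isCompl p
  set π₀ : (G ⧸ M → ℂ) →ₗ[ℂ] (G ⧸ M → ℂ) :=
    p.subtype ∘ₗ (p.projectionOnto pc hpc) with hπ₀
  have hπ₀mem : ∀ v, π₀ v ∈ p := fun v => (p.projectionOnto pc hpc v).2
  have hπ₀fix : ∀ v ∈ p, π₀ v = v := by
    intro v hv
    show (p.projectionOnto pc hpc v : G ⧸ M → ℂ) = v
    rw [Submodule.projectionOnto_apply_left hpc ⟨v, hv⟩]
  set E : (G ⧸ M → ℂ) →ₗ[ℂ] (G ⧸ M → ℂ) :=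
    (Fintype.card G : ℂ)⁻¹ • ∑ g : G, (P g) ∘ₗ π₀ ∘ₗ (P g⁻¹) with hE
  have hcard : (Fintype.card G : ℂ) ≠ 0 := Nat.cast_ne_zero.mpr Fintype.card_ne_zero
  have hEapply : ∀ v, E v = (Fintype.card G : ℂ)⁻¹ • ∑ g : G, P g (π₀ (P g⁻¹ v)) := by
    intro v
    simp [hE, LinearMap.sum_apply]
  have hEmem : ∀ v, E v ∈ p := by
    intro v
    rw [hEapply]
    exact Submodule.smul_mem _ _ (Submodule.sum_mem _ fun g _ =>
      hpinv g _ (hπ₀mem _))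
  have hEfix : ∀ v ∈ p, E v = v := by
    intro v hv
    rw [hEapply]
    have : ∀ g : G, P g (π₀ (P g⁻¹ v)) = v := by
      intro g
      rw [hπ₀fix _ (hpinv g⁻¹ v hv)]
      have : P g (P g⁻¹ v) = (P g * P g⁻¹) v := rfl
      rw [this, ← map_mul, mul_inv_cancel, map_one]
      rfl
    simp only [this, Finset.sum_const, Finset.card_univ, ← Nat.cast_smul_eq_nsmul ℂ]
    rw [smul_smul, inv_mul_cancel₀ hcard, one_smul]
  have hEequiv : ∀ (h : G) v, E (P h v) = P h (E v) := by
    intro h v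
    rw [hEapply, hEapply, map_smul, map_sum]
    congr 1
    refine (Fintype.sum_equiv (Equiv.mulLeft h)
      (fun x => P h ((P x) (π₀ (P x⁻¹ v))))
      (fun g => P g (π₀ (P g⁻¹ (P h v)))) ?_).symm
    intro x
    have e1 : P (h * x)⁻¹ (P h v) = P x⁻¹ v := by
      rw [← Module.End.mul_apply, ← map_mul]
      congr 1
      group
    show P h ((P x) (π₀ (P x⁻¹ v))) = P (h * x) (π₀ (P (h * x)⁻¹ (P h v)))
    rw [e1, map_mul]
    rfl
  -- the distinguished invariant vector
  set v₀ : G ⧸ M → ℂ := E (Pi.single (QuotientGroup.mk 1) 1) with hv₀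
  have hv₀p : v₀ ∈ p := hEmem _
  have hMfix : ∀ m ∈ M, P m v₀ = v₀ := by
    intro m hm
    have hsm : (m • (QuotientGroup.mk (1:G) : G ⧸ M)) = QuotientGroup.mk 1 := by
      rw [MulAction.Quotient.smul_mk]
      apply QuotientGroup.eq.mpr
      simpa using hm
    rw [hv₀, ← hEequiv, permRep_single, hsm]
  have hv₀ne : v₀ ≠ 0 := by
    intro h0
    have hall : ∀ q : G ⧸ M, E (Pi.single q 1) = 0 := by
      intro q
      induction q using QuotientGroup.induction_on with
      | H x =>
        have : (QuotientGroup.mk x : G ⧸ M) = x • (QuotientGroup.mk 1) := by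
          simp [MulAction.Quotient.smul_mk]
        rw [this, ← permRep_single, hEequiv, ← hv₀, h0, map_zero]
    obtain ⟨w, hw, hw0⟩ := Submodule.exists_mem_ne_zero_of_ne_bot hpne
    apply hw0
    rw [← hEfix w hw]
    have hw' : w = ∑ q : G ⧸ M, w q • (Pi.single q (1 : ℂ) : G ⧸ M → ℂ) := by
      funext y
      rw [Finset.sum_apply]
      simp [Pi.single_apply]
    rw [hw', map_sum]
    simp only [map_smul, hall, smul_zero, Finset.sum_const_zero]
  -- it gives a nonzero M-invariant vector of X
  have hinv_ne : Representation.invariants ((X.ρ).comp M.subtype) ≠ ⊥ := by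
    have hxmem : (⟨v₀, hv₀p⟩ : p) ∈ Representation.invariants ((X.ρ).comp M.subtype) := by
      rw [Representation.mem_invariants]
      intro m
      apply Subtype.ext
      show P (m : G) v₀ = v₀
      exact hMfix m m.2
    exact (Submodule.ne_bot_iff _).mpr
      ⟨⟨v₀, hv₀p⟩, hxmem, fun h => hv₀ne (by simpa using congrArg Subtype.val h)⟩
  -- X.character is a constituent of permChar M
  have hconst : IsConstituent G X.character (permChar M) := by
    refine ⟨⟨X, hsimple, rfl⟩, ?_⟩
    rw [charInner_eq_finrank_invariants]
    rw [Nat.cast_ne_zero]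
    intro h
    exact hinv_ne (Submodule.finrank_eq_zero.mp h)
  have hdim : finrank ℂ p = 1 := by
    have h1 := hlin X.character hconst
    rw [FDRep.char_one] at h1
    have h2 : finrank ℂ X = 1 := by exact_mod_cast h1
    exact h2
  -- the kernel subgroup
  set K : Subgroup G :=
    { carrier := {g | ∀ v ∈ p, P g v = v}
      one_mem' := by intro v _; rw [map_one]; rfl
      mul_mem' := by
        intro a b ha hb v hv
        have : P (a * b) v = P a (P b v) := by rw [map_mul]; rfl
        rw [this, hb v hv, ha v hv]
      inv_mem' := by
        intro a ha v hv
        have h1 : P a (P a⁻¹ v) = v := by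
          rw [← Module.End.mul_apply, ← map_mul, mul_inv_cancel, map_one]
          rfl
        have h2 : P a (P a⁻¹ v) = P a⁻¹ v := ha _ (hpinv a⁻¹ v hv)
        rw [← h2, h1] } with hK
  have hMK : M ≤ K := by
    intro m hm v hv
    -- every element of p is a multiple of v₀
    have hspan : (ℂ ∙ (⟨v₀, hv₀p⟩ : p)) = (⊤ : Submodule ℂ p) := by
      apply Submodule.eq_top_of_finrank_eq
      rw [finrank_span_singleton, hdim]
      intro h
      exact hv₀ne (by simpa using congrArg Subtype.val h)
    have : (⟨v, hv⟩ : p) ∈ (ℂ ∙ (⟨v₀, hv₀p⟩ : p)) := by rw [hspan]; trivial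
    obtain ⟨c, hc⟩ := Submodule.mem_span_singleton.mp this
    have hvc : v = c • v₀ := by
      have := congrArg Subtype.val hc
      simpa using this.symm
    rw [hvc, map_smul, hMfix m hm]
  have hKtop : K ≠ ⊤ := by
    intro htop
    apply hv₀ne
    have hconst' : ∀ x : G, v₀ (QuotientGroup.mk x) = v₀ (QuotientGroup.mk 1) := by
      intro x
      have hx : (x : G) ∈ K := htop ▸ Subgroup.mem_top x
      have := congrFun (hx v₀ hv₀p) (QuotientGroup.mk x)
      rw [permRep_apply] at this
      rw [← this]
      congr 1
      rw [MulAction.Quotient.smul_mk]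
      simp
    have hsum : ∑ q : G ⧸ M, v₀ q = 0 := hpU hv₀p
    have hallc : ∀ q : G ⧸ M, v₀ q = v₀ (QuotientGroup.mk 1) := by
      intro q
      induction q using QuotientGroup.induction_on with
      | H x => exact hconst' x
    rw [Finset.sum_congr rfl (fun q _ => hallc q), Finset.sum_const,
      Finset.card_univ, ← Nat.cast_smul_eq_nsmul ℂ] at hsum
    have hcq : (Fintype.card (G ⧸ M) : ℂ) ≠ 0 := Nat.cast_ne_zero.mpr Fintype.card_ne_zero
    have h0 : v₀ (QuotientGroup.mk 1) = 0 := by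
      rcases smul_eq_zero.mp hsum with h | h
      · exact absurd h hcq
      · exact h
    funext q
    rw [hallc q, h0]; rfl
  have hMeqK : M = K := by
    by_contra hne
    exact hKtop (hM.2 K (lt_of_le_of_ne hMK hne))
  rw [hMeqK]
  constructor
  intro n hn g v hv
  have h1 : P (g * n * g⁻¹) v = P g (P n (P g⁻¹ v)) := by
    rw [map_mul, map_mul]; rfl
  rw [h1, hn _ (hpinv g⁻¹ v hv)]
  have : P g (P g⁻¹ v) = v := by
    rw [← Module.End.mul_apply, ← map_mul, mul_inv_cancel, map_one]
    rfl
  rw [this]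
lemma linear_of_nilpotent_constituent (hnil : Group.IsNilpotent G) (M : Subgroup G)
    (hM : IsCoatom M) (χ : G → ℂ) (hχ : IsConstituent G χ (permChar M)) : χ 1 = 1 := by
  classical
  letI : Fintype G := Fintype.ofFinite G
  -- M is normal
  have h3 : ∀ H : Subgroup G, IsCoatom H → H.Normal :=
    (isNilpotent_of_finite_tfae.out 0 2).mp hnil
  have hN : M.Normal := h3 M hM
  obtain ⟨⟨V, hsimple, hchar⟩, hne⟩ := hχ
  subst hchar
  rw [charInner_eq_finrank_invariants] at hne
  -- there is a nonzero M-invariant vector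
  have hinv_ne : Representation.invariants ((V.ρ).comp M.subtype) ≠ ⊥ := by
    intro h
    rw [h] at hne
    simp at hne
  -- the space of M-invariants is G-invariant, hence everything
  set W : Submodule ℂ V.V := Representation.invariants ((V.ρ).comp M.subtype) with hW
  have hWinv : ∀ g : G, ∀ v ∈ W, V.ρ g v ∈ W := by
    intro g v hv
    rw [hW, Representation.mem_invariants] at hv ⊢
    intro m
    have hm' : g⁻¹ * (m : G) * g ∈ M := by
      have := hN.conj_mem (m : G) m.2 g⁻¹
      simpa using this
    have h1 : (m : G) * g = g * (g⁻¹ * (m : G) * g) := by group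
    show V.ρ (m : G) (V.ρ g v) = V.ρ g v
    rw [← Module.End.mul_apply, ← map_mul, h1, map_mul, Module.End.mul_apply]
    congr 1
    exact hv ⟨g⁻¹ * (m : G) * g, hm'⟩
  have hWtop : W = ⊤ := subrep_eq_top_of_simple V hsimple W hWinv hinv_ne
  -- M acts trivially on V
  have hMtriv : ∀ m ∈ M, ∀ v : V.V, V.ρ m v = v := by
    intro m hm v
    have : v ∈ W := hWtop ▸ Submodule.mem_top
    rw [hW, Representation.mem_invariants] at this
    exact this ⟨m, hm⟩
  -- a nonzero vector
  obtain ⟨x, _, hx0⟩ := Submodule.exists_mem_ne_zero_of_ne_bot hinv_ne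
  have hx0' : (x : V.V) ≠ 0 := hx0
  haveI : Nontrivial V.V := nontrivial_of_ne _ _ hx0'
  haveI : Nontrivial V := nontrivial_of_ne _ _ hx0'
  -- a generator modulo M
  obtain ⟨g₀, hg₀⟩ : ∃ g₀, g₀ ∉ M := by
    by_contra h
    push_neg at h
    exact hM.1 ((Subgroup.eq_top_iff' M).mpr h)
  have hgen : ∀ q : G ⧸ M, ∃ k : ℕ, (QuotientGroup.mk g₀ : G ⧸ M) ^ k = q := by
    have hcom : M < Subgroup.comap (QuotientGroup.mk' M)
        (Subgroup.zpowers (QuotientGroup.mk g₀ : G ⧸ M)) := by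
      apply lt_of_le_of_ne
      · intro m hm
        simp only [Subgroup.mem_comap]
        have : (QuotientGroup.mk' M) m = 1 := by
          simpa [QuotientGroup.mk'_apply] using (QuotientGroup.eq_one_iff m).mpr hm
        rw [this]
        exact Subgroup.one_mem _
      · intro h
        apply hg₀
        have : g₀ ∈ Subgroup.comap (QuotientGroup.mk' M)
            (Subgroup.zpowers (QuotientGroup.mk g₀ : G ⧸ M)) :=
          Subgroup.mem_comap.mpr (Subgroup.mem_zpowers _)
        rw [← h] at this
        exact this
    have htop := hM.2 _ hcom
    intro q
    induction q using QuotientGroup.induction_on with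
    | H x =>
      have : x ∈ Subgroup.comap (QuotientGroup.mk' M)
          (Subgroup.zpowers (QuotientGroup.mk g₀ : G ⧸ M)) := htop ▸ Subgroup.mem_top x
      have hz : (QuotientGroup.mk x : G ⧸ M) ∈
          Subgroup.zpowers (QuotientGroup.mk g₀ : G ⧸ M) := Subgroup.mem_comap.mp this
      have hp : (QuotientGroup.mk x : G ⧸ M) ∈
          Submonoid.powers (QuotientGroup.mk g₀ : G ⧸ M) :=
        mem_powers_iff_mem_zpowers.mpr hz
      obtain ⟨k, hk⟩ := hp
      exact ⟨k, hk⟩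
  -- eigenvector of ρ g₀
  obtain ⟨c, hc⟩ := Module.End.exists_eigenvalue (V.ρ g₀ : Module.End ℂ V.V)
  set Ei : Submodule ℂ V.V := Module.End.eigenspace (V.ρ g₀ : Module.End ℂ V.V) c with hEi
  have hEiinv : ∀ h : G, ∀ v ∈ Ei, V.ρ h v ∈ Ei := by
    intro h v hv
    rw [hEi, Module.End.mem_eigenspace_iff] at hv ⊢
    -- h and g₀ commute modulo M
    obtain ⟨k, hk⟩ := hgen (QuotientGroup.mk h)
    have hmM : g₀⁻¹ * h⁻¹ * g₀ * h ∈ M := by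
      rw [← QuotientGroup.eq_one_iff]
      have : (QuotientGroup.mk (g₀⁻¹ * h⁻¹ * g₀ * h) : G ⧸ M)
          = (QuotientGroup.mk g₀)⁻¹ * (QuotientGroup.mk h)⁻¹
            * QuotientGroup.mk g₀ * QuotientGroup.mk h := by
        simp [QuotientGroup.mk_mul, QuotientGroup.mk_inv]
      rw [this, ← hk]
      group
    have hcomm : g₀ * h = h * g₀ * (g₀⁻¹ * h⁻¹ * g₀ * h) := by group
    have : V.ρ g₀ (V.ρ h v) = V.ρ h (V.ρ g₀ (V.ρ (g₀⁻¹ * h⁻¹ * g₀ * h) v)) := by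
      rw [← Module.End.mul_apply, ← map_mul, hcomm]
      rw [map_mul, map_mul, Module.End.mul_apply, Module.End.mul_apply]
    have hv' : V.ρ g₀ v = c • v := hv
    rw [this, hMtriv _ hmM v, hv', map_smul]
  have hEitop : Ei = ⊤ := subrep_eq_top_of_simple V hsimple Ei hEiinv hc
  have hg₀scal : ∀ v : V.V, V.ρ g₀ v = c • v := by
    intro v
    have : v ∈ Ei := hEitop ▸ Submodule.mem_top
    rw [hEi, Module.End.mem_eigenspace_iff] at this
    exact this
  -- every group element acts by a scalar
  have hscal : ∀ h : G, ∃ d : ℂ, ∀ v : V.V, V.ρ h v = d • v := by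
    intro h
    obtain ⟨k, hk⟩ := hgen (QuotientGroup.mk h)
    refine ⟨c ^ k, fun v => ?_⟩
    have hmem : (g₀ ^ k)⁻¹ * h ∈ M := by
      rw [← QuotientGroup.eq_one_iff]
      have : (QuotientGroup.mk ((g₀ ^ k)⁻¹ * h) : G ⧸ M)
          = ((QuotientGroup.mk g₀ : G ⧸ M) ^ k)⁻¹ * QuotientGroup.mk h := by
        simp [QuotientGroup.mk_mul, QuotientGroup.mk_inv, QuotientGroup.mk_pow]
      rw [this, hk]
      group
    have hdecomp : h = g₀ ^ k * ((g₀ ^ k)⁻¹ * h) := by group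
    have hpowscal : ∀ (n : ℕ) (w : V.V), V.ρ (g₀ ^ n) w = c ^ n • w := by
      intro n
      induction n with
      | zero => intro w; simp
      | succ n ih =>
        intro w
        rw [pow_succ, map_mul, Module.End.mul_apply, hg₀scal w, map_smul, ih w,
          smul_smul, ← pow_succ']
    conv_lhs => rw [hdecomp]
    rw [map_mul, Module.End.mul_apply, hMtriv _ hmem v, hpowscal k v]
  -- conclude dim 1
  have hspaninv : ∀ h : G, ∀ v ∈ (ℂ ∙ (x : V.V)), V.ρ h v ∈ (ℂ ∙ (x : V.V)) := by
    intro h v hv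
    obtain ⟨c', hc'⟩ := Submodule.mem_span_singleton.mp hv
    obtain ⟨d, hd⟩ := hscal h
    rw [← hc', hd]
    exact Submodule.mem_span_singleton.mpr ⟨d * c', by rw [mul_smul]⟩
  have hspanne : (ℂ ∙ (x : V.V)) ≠ ⊥ := by
    intro h
    exact hx0' (Submodule.span_singleton_eq_bot.mp h)
  have hspantop : (ℂ ∙ (x : V.V)) = ⊤ :=
    subrep_eq_top_of_simple V hsimple _ hspaninv hspanne
  have h1 : finrank ℂ V.V = 1 := by
    have h2 := finrank_span_singleton (K := ℂ) hx0'
    rw [hspantop, finrank_top] at h2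
    exact h2
  rw [FDRep.char_one]
  have : finrank ℂ V = 1 := h1
  rw [this]
  norm_num
end Tools

/-- A finite group `G` is nilpotent if and only if every irreducible constituent of
`(1_M)^G`, as `M` ranges over all maximal subgroups of `G`, is linear. -/
theorem stmt16 {G : Type} [Group G] [Finite G] :
    Group.IsNilpotent G ↔
      ∀ M : Subgroup G, IsCoatom M →
        ∀ χ : G → ℂ, IsConstituent G χ (permChar M) → χ 1 = 1 := by
  constructor
  · intro hnil M hM χ hχ
    exact linear_of_nilpotent_constituent hnil M hM χ hχ
  · intro h
    letI : Fintype G := Fintype.ofFinite G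
    have h3 : ∀ H : Subgroup G, IsCoatom H → H.Normal := fun H hH =>
      normal_of_constituents_linear H hH (h H hH)
    exact (isNilpotent_of_finite_tfae.out 2 0).mp h3
end

section
/- Let N be a normal p-subgroup of a finite group G with p ∈ π, let K be a Hall π'-subgroup of NK ⊴ G, and suppose some λ ∈ Irr(N) that is G-invariant on NK extends to NK. If N is abelian and λ extends to NK, then NK has a normal Hall π'-subgroup (normal π-complement in NK). -/
open scoped BigOperators Classical

open CategoryTheory Module in
/-- An irreducible character of an "abelian" group acts by scalars and is essentially
a linear character times the dimension. -/
lemma abelian_irrChar_scalar {G : Type} [Group G] (hab : ∀ a b : G, a * b = b * a)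
    {lam : G → ℂ} (hirr : IsIrrChar G lam) :
    ∃ (d : ℂ) (c : G → ℂ), d ≠ 0 ∧ lam 1 = d ∧ (∀ n, lam n = c n * d) ∧ c 1 = 1 ∧
      ∀ a b : G, c (a * b) = c a * c b := by
  obtain ⟨V, hs, hchar⟩ := hirr
  haveI := hs
  have hscal : ∀ n : G, ∃ c : ℂ, V.ρ n = c • LinearMap.id := by
    intro n
    let f : V ⟶ V := ⟨FGModuleCat.ofHom (V.ρ n), by
      intro m; ext v
      show V.ρ n (V.ρ m v) = V.ρ m (V.ρ n v)
      rw [← Module.End.mul_apply, ← Module.End.mul_apply, ← map_mul, ← map_mul, hab]⟩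
    obtain ⟨c, hc⟩ := endomorphism_simple_eq_smul_id ℂ f
    refine ⟨c, ?_⟩
    have := congrArg (fun φ : V ⟶ V => φ.hom.hom.hom) hc
    exact this.symm
  choose c hc using hscal
  have hfr : finrank ℂ V ≠ 0 := by
    intro h
    have hsub : Subsingleton V := (finrank_zero_iff (R := ℂ) (M := V)).mp h
    have : (𝟙 V : V ⟶ V) = 0 := by
      apply Action.hom_ext
      ext v
      exact Subsingleton.elim _ _
    exact id_nonzero V this
  have hd0 : ((finrank ℂ V : ℂ)) ≠ 0 := Nat.cast_ne_zero.mpr hfr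
  haveI : Nontrivial V := Module.nontrivial_of_finrank_pos (Nat.pos_of_ne_zero hfr)
  obtain ⟨v, hv⟩ := exists_ne (0 : V)
  have hinj : ∀ a b : ℂ, a • (LinearMap.id : V →ₗ[ℂ] V) = b • LinearMap.id → a = b := by
    intro a b hab'
    have := congrArg (fun f : V →ₗ[ℂ] V => f v) hab'
    simp only [LinearMap.smul_apply, LinearMap.id_apply] at this
    exact smul_left_injective ℂ hv this
  have hlamc : ∀ n : G, lam n = c n * (finrank ℂ V : ℂ) := by
    intro n
    rw [← hchar]
    show LinearMap.trace ℂ _ (V.ρ n) = _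
    rw [hc n]
    simp [map_smul, LinearMap.trace_id, smul_eq_mul]
  have hc1 : c 1 = 1 := by
    apply hinj
    rw [← hc 1, map_one, one_smul]
    rfl
  have hcm : ∀ a b : G, c (a * b) = c a * c b := by
    intro a b
    apply hinj
    rw [← hc (a * b), map_mul, hc a, hc b]
    ext w
    simp only [Module.End.mul_apply, LinearMap.smul_apply, LinearMap.id_apply, mul_smul]
  refine ⟨(finrank ℂ V : ℂ), c, hd0, ?_, hlamc, hc1, hcm⟩
  rw [hlamc 1, hc1, one_mul]

/-- If `N ⊴ H` is abelian with `H/N` a `π'`-group and some faithful irreducible character of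
`N` that is invariant in `H` extends to `H`, then `H` has a normal Hall `π'`-subgroup (a
normal `π`-complement). -/
theorem stmt18 {H : Type} [Group H] [Finite H] (π : Set ℕ)
    (N : Subgroup H) (hN : N.Normal) (hab : ∀ a b : N, a * b = b * a)
    (hquot : IsPiNumber πᶜ N.index)
    (lam : N → ℂ) (hirr : IsIrrChar N lam)
    (hfaith : ∀ n : N, lam n = lam 1 → n = 1)
    (hinv : ∀ h : H, conjChar hN h lam = lam)
    (hext : ∃ μ : H → ℂ, IsIrrChar H μ ∧ ∀ n : N, μ (n : H) = lam n) :
    ∃ K : Subgroup H, K.Normal ∧ IsPiNumber πᶜ (Nat.card K) ∧ IsPiNumber π K.index := by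
  classical
  -- Step 1: `lam` is essentially a linear character; invariance + faithfulness force `N` central.
  obtain ⟨d, c, hd0, hlam1, hlamc, hc1, hcm⟩ := abelian_irrChar_scalar hab hirr
  have hcent : ∀ (g n : H), n ∈ N → g * n * g⁻¹ = n := by
    intro g n hn
    have h1 : lam ⟨g * n * g⁻¹, hN.conj_mem n hn g⟩ = lam ⟨n, hn⟩ := congrFun (hinv g) ⟨n, hn⟩
    set m : N := ⟨g * n * g⁻¹, hN.conj_mem n hn g⟩ with hm
    have hcc : c m = c ⟨n, hn⟩ := by
      apply mul_right_cancel₀ hd0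
      rw [← hlamc, ← hlamc, h1]
    have h2 : lam (m * (⟨n, hn⟩ : N)⁻¹) = lam 1 := by
      rw [hlamc, hcm, hcc, ← hcm, mul_inv_cancel, hc1, one_mul, hlam1]
    have h3 := hfaith _ h2
    rw [mul_inv_eq_one] at h3
    exact congrArg Subtype.val h3
  have hcomm : ∀ n ∈ N, ∀ w : H, n * w = w * n := by
    intro n hn w
    have h := hcent w⁻¹ n hn
    rw [inv_inv] at h
    calc n * w = w * (w⁻¹ * n * w) := by group
      _ = w * n := by rw [h]
  -- Step 2: the `π`-torsion subgroup `P` of `N`.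
  let P : Subgroup H :=
    { carrier := {h | h ∈ N ∧ IsPiNumber π (orderOf h)}
      one_mem' := ⟨N.one_mem, by
        intro p hp hdvd
        rw [orderOf_one, Nat.dvd_one] at hdvd
        exact absurd hdvd hp.ne_one⟩
      mul_mem' := by
        rintro a b ⟨haN, haπ⟩ ⟨hbN, hbπ⟩
        refine ⟨N.mul_mem haN hbN, ?_⟩
        intro p hp hd
        have hco' : Commute a b := hcomm a haN b
        have hdvd : orderOf (a * b) ∣ orderOf a * orderOf b :=
          hco'.orderOf_mul_dvd_lcm.trans (Nat.lcm_dvd_mul _ _)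
        rcases hp.dvd_mul.mp (hd.trans hdvd) with h | h
        · exact haπ p hp h
        · exact hbπ p hp h
      inv_mem' := by
        rintro a ⟨h1, h2⟩
        exact ⟨N.inv_mem h1, by rwa [orderOf_inv]⟩ }
  have hPle : P ≤ N := fun x hx => hx.1
  have hPnormal : P.Normal := by
    constructor
    intro n hn g
    rw [hcent g n hn.1]
    exact hn
  have hPcard : IsPiNumber π (Nat.card P) := by
    intro p hp hd
    haveI : Fact p.Prime := ⟨hp⟩
    obtain ⟨x, hx⟩ := exists_prime_orderOf_dvd_card' (G := P) p hd
    have hxo : orderOf (x : H) = p := by rw [Subgroup.orderOf_coe, hx]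
    exact x.2.2 p hp (hxo ▸ dvd_refl p)
  have hrel : IsPiNumber πᶜ (P.relIndex N) := by
    intro p hp hd
    simp only [Set.mem_compl_iff]
    intro hpπ
    haveI : Fact p.Prime := ⟨hp⟩
    let S : Sylow p N := default
    have hS : (S : Subgroup N) ≤ P.subgroupOf N := by
      intro x hxS
      rw [Subgroup.mem_subgroupOf]
      refine ⟨x.2, ?_⟩
      obtain ⟨k, hk⟩ := IsPGroup.iff_orderOf.mp S.2 ⟨x, hxS⟩
      rw [Subgroup.orderOf_mk] at hk
      have e2 : orderOf ((x : H)) = p ^ k := by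
        rw [Subgroup.orderOf_coe, hk]
      intro q hq hqd
      rw [e2] at hqd
      have : q = p := (Nat.prime_dvd_prime_iff_eq hq hp).mp (hq.dvd_of_dvd_pow hqd)
      rwa [this]
    have hdvd2 : P.relIndex N ∣ (S : Subgroup N).index := by
      rw [Subgroup.relIndex]
      exact Subgroup.index_dvd_of_le hS
    exact Sylow.not_dvd_index S (hd.trans hdvd2)
  have hPindex : IsPiNumber πᶜ P.index := by
    intro p hp hd
    rw [← Subgroup.relIndex_mul_index hPle] at hd
    rcases hp.dvd_mul.mp hd with h | h
    · exact hrel p hp h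
    · exact hquot p hp h
  have hcop : (Nat.card P).Coprime P.index := by
    by_contra hnc
    obtain ⟨p, hp, hdvd⟩ := Nat.exists_prime_and_dvd hnc
    have h1 := hPcard p hp (hdvd.trans (Nat.gcd_dvd_left _ _))
    have h2 := hPindex p hp (hdvd.trans (Nat.gcd_dvd_right _ _))
    exact h2 h1
  haveI := hPnormal
  obtain ⟨K, hK⟩ := Subgroup.exists_right_complement'_of_coprime hcop
  have hKindex : K.index = Nat.card P := hK.index_eq_card
  have hKcard : Nat.card K = P.index := by
    have h1 : Nat.card P * Nat.card K = Nat.card H := hK.card_mul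
    have h2 : Nat.card P * P.index = Nat.card H := Subgroup.card_mul_index P
    exact Nat.eq_of_mul_eq_mul_left Nat.card_pos (h1.trans h2.symm)
  have hKnormal : K.Normal := by
    constructor
    intro k hk g
    obtain ⟨⟨x, y⟩, hxy, -⟩ := hK.existsUnique g
    have hxN : (x : H) ∈ N := hPle x.2
    have he : g * k * g⁻¹ = (y : H) * k * (y : H)⁻¹ := by
      rw [← hxy]
      have hc' := hcomm (x : H) hxN ((y : H) * k * (y : H)⁻¹)
      calc (x : H) * y * k * ((x : H) * y)⁻¹
          = (x : H) * ((y : H) * k * (y : H)⁻¹) * (x : H)⁻¹ := by group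
        _ = ((y : H) * k * (y : H)⁻¹) * (x : H) * (x : H)⁻¹ := by rw [hc']
        _ = (y : H) * k * (y : H)⁻¹ := by group
    rw [he]
    exact K.mul_mem (K.mul_mem y.2 hk) (K.inv_mem y.2)
  exact ⟨K, hKnormal, by rw [hKcard]; exact hPindex, by rw [hKindex]; exact hPcard⟩
end
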